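/- arXiv:1707.06259 — 7 statements merged into one kernel-verified Lean document; each statement's English description precedes it below -/
import Mathlib

section
/- Let λ be a partition of d with k = ℓ(λ) parts and let 0 < q < 1. Then the specialization of the monomial symmetric function m_λ at the geometric sequence (q, q², q³, …), namely (1/|aut(λ)|) Σ_{σ ∈ S_k} Σ_{1 ≤ i_1 < i_2 < … < i_k} q^{i_1 λ_{σ(1)} + i_2 λ_{σ(2)} + … + i_k λ_{σ(k)}}, converges and equals w_q(λ) = (1/|aut(λ)|) Σ_{σ ∈ S_k} ∏_{j=1}^{k} q^{S_j(σ)} / (1 − q^{S_j(σ)}), where S_j(σ) := λ_{σ(1)} + … + λ_{σ(j)}. -/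
open scoped Classical

/-- `|aut(λ)| = ∏ᵢ mᵢ(λ)!` where `mᵢ(λ)` is the number of parts equal to `i`. -/
def autCard {d : ℕ} (P : Nat.Partition d) : ℕ :=
  ∏ i ∈ P.parts.toFinset, (P.parts.count i).factorial

/-- The quantum weight `w_q(λ) = (1/|aut(λ)|) Σ_{σ ∈ S_k} ∏_{j=1}^k q^{S_j(σ)}/(1 - q^{S_j(σ)})`,
where `S_j(σ) = λ_{σ(1)} + … + λ_{σ(j)}` (the value does not depend on the ordering of the parts,
since we sum over all permutations). -/
noncomputable def wq (q : ℝ) {d : ℕ} (P : Nat.Partition d) : ℝ :=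
  (1 / (autCard P : ℝ)) *
    ∑ σ : Equiv.Perm (Fin P.parts.toList.length),
      ∏ j : Fin P.parts.toList.length,
        (q ^ (∑ i ∈ Finset.univ.filter (fun i => i ≤ j), P.parts.toList.get (σ i)) /
          (1 - q ^ (∑ i ∈ Finset.univ.filter (fun i => i ≤ j), P.parts.toList.get (σ i))))

/- ### Auxiliary lemmas -/

lemma aux_geom (q : ℝ) (hq0 : 0 < q) (hq1 : q < 1) (s : ℕ) (hs : 1 ≤ s) :
    HasSum (fun n : ℕ => q ^ ((n + 1) * s)) (q ^ s / (1 - q ^ s)) := by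
  have hr0 : (0:ℝ) ≤ q ^ s := by positivity
  have hr1 : q ^ s < 1 := pow_lt_one₀ hq0.le hq1 (by omega)
  have h := (hasSum_geometric_of_lt_one hr0 hr1).mul_left (q ^ s)
  have hfun : (fun n : ℕ => q ^ ((n + 1) * s)) = fun n : ℕ => q ^ s * (q ^ s) ^ n := by
    funext n
    rw [mul_comm (n + 1) s, pow_mul, pow_succ']
  rw [hfun, div_eq_mul_inv]
  exact h

lemma aux_pi : ∀ (n : ℕ) (g : Fin n → ℕ → ℝ) (t : Fin n → ℝ),
    (∀ i m, 0 ≤ g i m) → (∀ i, HasSum (g i) (t i)) →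
    HasSum (fun c : Fin n → ℕ => ∏ i, g i (c i)) (∏ i, t i) := by
  intro n
  induction n with
  | zero =>
    intro g t _ _
    have h1 : HasSum (fun _ : Fin 0 → ℕ => (1:ℝ))
        ((fun _ : Fin 0 → ℕ => (1:ℝ)) (fun i => i.elim0)) :=
      hasSum_single (f := fun _ : Fin 0 → ℕ => (1:ℝ)) (fun i => i.elim0)
        (fun b' hb' => absurd (funext fun i => i.elim0) hb')
    simpa using h1
  | succ n ih =>
    intro g t hg h
    have hfiber := ih (fun i => g i.succ) (fun i => t i.succ)
      (fun i m => hg i.succ m) (fun i => h i.succ)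
    have hsummable : Summable (fun x : ℕ × (Fin n → ℕ) =>
        g 0 x.1 * ∏ i : Fin n, g i.succ (x.2 i)) :=
      Summable.mul_of_nonneg (f := fun x : ℕ => g 0 x)
        (g := fun c : Fin n → ℕ => ∏ i : Fin n, g i.succ (c i))
        (h 0).summable hfiber.summable (fun x => hg 0 x)
        (fun c => Finset.prod_nonneg fun i _ => hg i.succ (c i))
    have hmul := HasSum.mul (f := fun x : ℕ => g 0 x)
      (g := fun c : Fin n → ℕ => ∏ i : Fin n, g i.succ (c i))
      (h 0) hfiber hsummable
    refine ((Fin.consEquiv fun _ => ℕ).hasSum_iff).mp ?_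
    have hfun : ((fun c : Fin (n+1) → ℕ => ∏ i, g i (c i)) ∘ (Fin.consEquiv fun _ => ℕ))
        = (fun x : ℕ × (Fin n → ℕ) => g 0 x.1 * ∏ i : Fin n, g i.succ (x.2 i)) := by
      funext x
      simp [Fin.consEquiv, Fin.prod_univ_succ, Fin.cons_zero, Fin.cons_succ]
    rw [hfun, Fin.prod_univ_succ t]
    exact hmul

/-- partial-sum map -/
def sFun {k : ℕ} (a : Fin k → ℕ) : Fin k → ℕ :=
  fun j => ∑ i ∈ Finset.univ.filter (fun i => i ≤ j), (a i + 1)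

lemma filter_le_eq_insert {k : ℕ} (j : Fin k) :
    Finset.univ.filter (fun i => i ≤ j) = insert j (Finset.univ.filter (fun i => i < j)) := by
  ext i
  simp only [Finset.mem_filter, Finset.mem_univ, true_and, Finset.mem_insert]
  constructor
  · intro hi
    rcases eq_or_lt_of_le hi with h | h
    · exact Or.inl (by exact_mod_cast h)
    · exact Or.inr h
  · rintro (rfl | h)
    · exact le_refl _
    · exact le_of_lt h

lemma sFun_strictMono {k : ℕ} (a : Fin k → ℕ) : StrictMono (sFun a) := by
  intro j j' hjj
  refine Finset.sum_lt_sum_of_subset ?_ (i := j') ?_ ?_ ?_ ?_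
  · intro i hi
    simp only [Finset.mem_filter, Finset.mem_univ, true_and] at hi ⊢
    exact le_trans hi hjj.le
  · simp
  · simp [not_le.mpr hjj]
  · omega
  · intro i _ _; omega

lemma sFun_one_le {k : ℕ} (a : Fin k → ℕ) (j : Fin k) : 1 ≤ sFun a j := by
  have hmem : j ∈ Finset.univ.filter (fun i => i ≤ j) := by simp
  have h1 : a j + 1 ≤ sFun a j :=
    Finset.single_le_sum (f := fun i => a i + 1) (fun i _ => Nat.zero_le _) hmem
  omega

lemma sFun_injective {k : ℕ} : Function.Injective (sFun (k := k)) := by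
  intro a a' hv
  funext j
  obtain ⟨m, hm⟩ := j
  induction m using Nat.strong_induction_on with
  | _ m IH =>
    have hj := congrFun hv ⟨m, hm⟩
    unfold sFun at hj
    rw [filter_le_eq_insert] at hj
    rw [Finset.sum_insert (by simp), Finset.sum_insert (by simp)] at hj
    have hsum : ∑ i ∈ Finset.univ.filter (fun i => i < (⟨m, hm⟩ : Fin k)), (a i + 1)
        = ∑ i ∈ Finset.univ.filter (fun i => i < (⟨m, hm⟩ : Fin k)), (a' i + 1) := by
      refine Finset.sum_congr rfl fun i hi => ?_
      simp only [Finset.mem_filter, Finset.mem_univ, true_and] at hi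
      have hlt : (i : ℕ) < m := hi
      have h2 := IH i hlt i.isLt
      simp only [Fin.eta] at h2
      omega
    omega

lemma sFun_surjective {k : ℕ} (v : Fin k → ℕ) (hmono : StrictMono v) (h1 : ∀ t, 1 ≤ v t) :
    ∃ a, sFun a = v := by
  set a : Fin k → ℕ := fun j =>
    if h : (j : ℕ) = 0 then v j - 1 else v j - v ⟨(j:ℕ) - 1, by omega⟩ - 1 with haDef
  have ha0 : ∀ h0 : 0 < k, a ⟨0, h0⟩ = v ⟨0, h0⟩ - 1 := fun h0 => dif_pos rfl
  have haS : ∀ m (hm1 : m + 1 < k),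
      a ⟨m+1, hm1⟩ = v ⟨m+1, hm1⟩ - v ⟨m, by omega⟩ - 1 :=
    fun m hm1 => dif_neg (Nat.succ_ne_zero m)
  refine ⟨a, ?_⟩
  funext j
  obtain ⟨m, hm⟩ := j
  induction m with
  | zero =>
    unfold sFun
    have hset : Finset.univ.filter (fun i => i ≤ (⟨0, hm⟩ : Fin k)) = {(⟨0, hm⟩ : Fin k)} := by
      ext i
      simp only [Finset.mem_filter, Finset.mem_univ, true_and, Finset.mem_singleton]
      constructor
      · intro hi; exact Fin.ext (by exact Nat.le_zero.mp hi)
      · rintro rfl; exact le_refl _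
    rw [hset, Finset.sum_singleton, ha0 hm]
    have := h1 ⟨0, hm⟩
    omega
  | succ m ihm =>
    have hm' : m < k := by omega
    unfold sFun
    rw [filter_le_eq_insert, Finset.sum_insert (by simp)]
    have hset : Finset.univ.filter (fun i => i < (⟨m+1, hm⟩ : Fin k))
        = Finset.univ.filter (fun i => i ≤ (⟨m, hm'⟩ : Fin k)) := by
      ext i
      simp only [Finset.mem_filter, Finset.mem_univ, true_and]
      constructor
      · intro hi; exact Nat.lt_succ_iff.mp hi
      · intro hi; exact Nat.lt_succ_iff.mpr hi
    rw [hset]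
    have hIH := ihm hm'
    unfold sFun at hIH
    rw [hIH, haS m hm]
    have hlt : v ⟨m, hm'⟩ < v ⟨m+1, hm⟩ := hmono (by simp [Fin.lt_def])
    omega

/-- The equivalence between `Fin k → ℕ` and strictly monotone, `≥ 1` functions. -/
noncomputable def vEquiv (k : ℕ) :
    (Fin k → ℕ) ≃ {v : Fin k → ℕ // StrictMono v ∧ ∀ t, 1 ≤ v t} :=
  Equiv.ofBijective (fun a => ⟨sFun a, sFun_strictMono a, sFun_one_le a⟩)
    ⟨fun a a' h => sFun_injective (by simpa using congrArg Subtype.val h),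
     fun ⟨v, hmono, h1⟩ => by
       obtain ⟨a, ha⟩ := sFun_surjective v hmono h1
       exact ⟨a, Subtype.ext ha⟩⟩

/-- reversal on functions -/
def revArr (k : ℕ) : (Fin k → ℕ) ≃ (Fin k → ℕ) where
  toFun a := fun i => a i.rev
  invFun a := fun i => a i.rev
  left_inv a := by funext i; simp [Fin.rev_rev]
  right_inv a := by funext i; simp [Fin.rev_rev]

/-- Exponent identity. -/
lemma exp_eq {k : ℕ} (L : Fin k → ℕ) (σ : Equiv.Perm (Fin k)) (a : Fin k → ℕ) :
    ∑ j, sFun a j * L (σ (Fin.rev j)) =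
      ∑ i, (a (Fin.rev i) + 1) *
        (∑ l ∈ Finset.univ.filter (fun l => l ≤ i), L (σ l)) := by
  have step1 : ∑ j, sFun a j * L (σ (Fin.rev j))
      = ∑ i : Fin k, (a i + 1) *
          (∑ l ∈ Finset.univ.filter (fun l => l ≤ Fin.rev i), L (σ l)) := by
    unfold sFun
    simp only [Finset.sum_mul, Finset.sum_filter, ite_mul, zero_mul]
    rw [Finset.sum_comm]
    refine Finset.sum_congr rfl fun i _ => ?_
    rw [Finset.mul_sum]
    have hrev : ∑ j : Fin k, (if i ≤ j then (a i + 1) * L (σ (Fin.rev j)) else 0)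
        = ∑ j : Fin k, (if i ≤ Fin.rev j then (a i + 1) * L (σ j) else 0) := by
      refine Fintype.sum_bijective Fin.rev Fin.rev_bijective _ _ fun x => ?_
      simp [Fin.rev_rev]
    rw [hrev]
    refine Finset.sum_congr rfl fun j _ => ?_
    have hiff : (i ≤ Fin.rev j) ↔ (j ≤ Fin.rev i) := by
      rw [Fin.le_def, Fin.le_def, Fin.val_rev, Fin.val_rev]
      omega
    simp only [hiff, mul_ite, mul_zero]
  rw [step1]
  refine Fintype.sum_bijective Fin.rev Fin.rev_bijective _ _ fun x => ?_
  simp [Fin.rev_rev]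

set_option maxHeartbeats 1000000 in
/-- For a partition `λ` of `d` with `k = ℓ(λ)` parts and `0 < q < 1`, the
specialization of the monomial symmetric function `m_λ` at `(q, q², q³, …)`, i.e.
`(1/|aut(λ)|) Σ_{σ ∈ S_k} Σ_{1 ≤ i₁ < … < i_k} q^{i₁λ_{σ(1)} + … + i_kλ_{σ(k)}}`,
converges and equals `w_q(λ)`. -/
theorem zero_temp_stmt1 (d : ℕ) (P : Nat.Partition d) (q : ℝ) (hq0 : 0 < q) (hq1 : q < 1) :
    HasSum
      (fun sv : Equiv.Perm (Fin P.parts.toList.length) ×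
          {v : Fin P.parts.toList.length → ℕ // StrictMono v ∧ ∀ t, 1 ≤ v t} =>
        (1 / (autCard P : ℝ)) *
          q ^ (∑ j, sv.2.1 j * P.parts.toList.get (sv.1 j)))
      (wq q P) := by
  set k := P.parts.toList.length with hk
  set L : Fin k → ℕ := fun j => P.parts.toList.get j with hL
  have hL1 : ∀ j, 1 ≤ L j := by
    intro j
    have hmem : P.parts.toList.get j ∈ P.parts := by
      rw [← Multiset.mem_toList]
      exact List.get_mem _ _
    exact P.parts_pos hmem
  set S : Equiv.Perm (Fin k) → Fin k → ℕ :=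
    fun σ j => ∑ i ∈ Finset.univ.filter (fun i => i ≤ j), L (σ i) with hS
  have hS1 : ∀ σ j, 1 ≤ S σ j := by
    intro σ j
    have hmem : j ∈ Finset.univ.filter (fun i => i ≤ j) := by simp
    have h2 : L (σ j) ≤ S σ j :=
      Finset.single_le_sum (f := fun i => L (σ i)) (fun i _ => Nat.zero_le _) hmem
    exact le_trans (hL1 (σ j)) h2
  set A : ℝ := 1 / (autCard P : ℝ) with hA
  -- per-σ fiber sums
  have hfiber : ∀ σ : Equiv.Perm (Fin k),
      HasSum (fun a : Fin k → ℕ => A * q ^ (∑ i, (a (Fin.rev i) + 1) * S σ i))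
        (A * ∏ j, (q ^ (S σ j) / (1 - q ^ (S σ j)))) := by
    intro σ
    have h1 : ∀ i : Fin k, HasSum (fun n : ℕ => q ^ ((n + 1) * S σ i))
        (q ^ (S σ i) / (1 - q ^ (S σ i))) := fun i => aux_geom q hq0 hq1 _ (hS1 σ i)
    have h2 := aux_pi k (fun i n => q ^ ((n + 1) * S σ i)) _
      (fun i n => by positivity) h1
    have h3 : HasSum (fun a : Fin k → ℕ => ∏ i, q ^ ((a (Fin.rev i) + 1) * S σ i))
        (∏ j, (q ^ (S σ j) / (1 - q ^ (S σ j)))) := by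
      refine ((revArr k).hasSum_iff).mp ?_
      have heq : ((fun a : Fin k → ℕ => ∏ i, q ^ ((a (Fin.rev i) + 1) * S σ i)) ∘ (revArr k))
          = fun c : Fin k → ℕ => ∏ i, q ^ ((c i + 1) * S σ i) := by
        funext c
        refine Finset.prod_congr rfl fun i _ => ?_
        simp [revArr, Fin.rev_rev]
      rw [heq]
      exact h2
    have h4 : (fun a : Fin k → ℕ => ∏ i, q ^ ((a (Fin.rev i) + 1) * S σ i))
        = (fun a : Fin k → ℕ => q ^ (∑ i, (a (Fin.rev i) + 1) * S σ i)) := by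
      funext a
      rw [← Finset.prod_pow_eq_pow_sum]
    rw [h4] at h3
    exact h3.mul_left A
  -- combined equivalence
  set Ψ : (Σ _ : Equiv.Perm (Fin k), (Fin k → ℕ)) ≃
      (Equiv.Perm (Fin k) × {v : Fin k → ℕ // StrictMono v ∧ ∀ t, 1 ≤ v t}) :=
    (Equiv.sigmaEquivProd _ _).trans
      (Equiv.prodCongr (Equiv.mulRight Fin.revPerm) (vEquiv k)) with hΨ
  refine (Ψ.hasSum_iff).mp ?_
  have hfun : ((fun sv : Equiv.Perm (Fin k) × {v : Fin k → ℕ // StrictMono v ∧ ∀ t, 1 ≤ v t} =>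
        (1 / (autCard P : ℝ)) * q ^ (∑ j, sv.2.1 j * L (sv.1 j))) ∘ Ψ)
      = fun p : (Σ _ : Equiv.Perm (Fin k), (Fin k → ℕ)) =>
          A * q ^ (∑ i, (p.2 (Fin.rev i) + 1) * S p.1 i) := by
    funext p
    obtain ⟨σ, a⟩ := p
    have hexp : ∑ j, sFun a j * L ((σ * Fin.revPerm : Equiv.Perm (Fin k)) j)
        = ∑ i, (a (Fin.rev i) + 1) * S σ i := by
      have h := exp_eq L σ a
      simpa [Equiv.Perm.mul_apply, Fin.revPerm_apply, hS] using h
    show (1 / (autCard P : ℝ)) *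
        q ^ (∑ j, sFun a j * L ((σ * Fin.revPerm : Equiv.Perm (Fin k)) j))
      = A * q ^ (∑ i, (a (Fin.rev i) + 1) * S σ i)
    rw [hexp, hA]
  rw [hfun]
  -- now sum over sigma type
  have hwq : wq q P = ∑ σ : Equiv.Perm (Fin k),
      A * ∏ j, (q ^ (S σ j) / (1 - q ^ (S σ j))) := by
    unfold wq
    rw [Finset.mul_sum]
  have hg : HasSum (fun σ : Equiv.Perm (Fin k) =>
      A * ∏ j, (q ^ (S σ j) / (1 - q ^ (S σ j)))) (wq q P) := by
    rw [hwq]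
    exact hasSum_fintype _
  refine HasSum.sigma_of_hasSum hg (fun σ => hfiber σ) ?_
  refine (summable_sigma_of_nonneg ?_).mpr ⟨fun σ => (hfiber σ).summable, Summable.of_finite⟩
  intro x
  positivity
end

section
/- Let d ≥ 2. Then there exist a constant C > 0 and δ ∈ (0,1) such that for all q ∈ (0, δ): Σ_{λ} w_q(λ) ≤ C · q^{d+2}, where the sum runs over all partitions λ of d with λ ≠ (d) and λ ≠ (d−1,1). -/
open scoped Classical

def hook (d : ℕ) (hd : 2 ≤ d) : Nat.Partition d where
  parts := {d - 1, 1}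
  parts_pos := by
    intro i hi
    simp only [Multiset.insert_eq_cons, Multiset.mem_cons, Multiset.mem_singleton] at hi
    rcases hi with h | h <;> omega
  parts_sum := by
    simp only [Multiset.insert_eq_cons, Multiset.sum_cons, Multiset.sum_singleton]
    omega

-- auxiliary lemmas

lemma list_sum_S_ge (d : ℕ) (L : List ℕ) (hsum : L.sum = d)
    (hpos : ∀ x ∈ L, 1 ≤ x) (hk2 : 2 ≤ L.length)
    (hno1 : L.length = 2 → ∀ x ∈ L, 2 ≤ x) (σ : Equiv.Perm (Fin L.length)) :
    d + 2 ≤ ∑ j : Fin L.length,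
      ∑ i ∈ Finset.univ.filter (fun i => i ≤ j), L.get (σ i) := by
  have hj1 : L.length - 1 < L.length := by omega
  have hj0 : L.length - 2 < L.length := by omega
  set j1 : Fin L.length := ⟨L.length - 1, hj1⟩ with hj1d
  set j0 : Fin L.length := ⟨L.length - 2, hj0⟩ with hj0d
  have hne' : j0 ≠ j1 := by simp only [hj0d, hj1d, Fin.ne_iff_vne]; omega
  have hS1 : (∑ i ∈ Finset.univ.filter (fun i => i ≤ j1), L.get (σ i)) = d := by
    have huniv : Finset.univ.filter (fun i : Fin L.length => i ≤ j1) = Finset.univ := by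
      ext i
      simp only [Finset.mem_filter, Finset.mem_univ, true_and, iff_true]
      rw [Fin.le_def]; have := i.2; simp only [hj1d]; omega
    rw [huniv, Equiv.sum_comp σ (fun i => L.get i), ← hsum]
    simp only [List.get_eq_getElem]; exact Fin.sum_univ_getElem L
  have hS0 : 2 ≤ ∑ i ∈ Finset.univ.filter (fun i => i ≤ j0), L.get (σ i) := by
    rcases Nat.lt_or_ge L.length 3 with h3 | h3
    · have hk2' : L.length = 2 := by omega
      have hsub : {(⟨0, by omega⟩ : Fin L.length)} ⊆
          Finset.univ.filter (fun i => i ≤ j0) := by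
        intro i hi
        simp only [Finset.mem_singleton] at hi
        subst hi
        simp only [Finset.mem_filter, Finset.mem_univ, true_and]
        rw [Fin.le_def]; simp only [hj0d]; omega
      calc (2 : ℕ) ≤ L.get (σ ⟨0, by omega⟩) :=
            hno1 hk2' _ (L.get_mem _)
        _ = ∑ i ∈ {(⟨0, by omega⟩ : Fin L.length)}, L.get (σ i) := by
            rw [Finset.sum_singleton]
        _ ≤ _ := Finset.sum_le_sum_of_subset hsub
    · have hsub : ({⟨0, by omega⟩, ⟨1, by omega⟩} : Finset (Fin L.length)) ⊆
          Finset.univ.filter (fun i => i ≤ j0) := by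
        intro i hi
        simp only [Finset.mem_insert, Finset.mem_singleton] at hi
        simp only [Finset.mem_filter, Finset.mem_univ, true_and]
        rcases hi with h | h <;>
          · subst h; rw [Fin.le_def]; simp only [hj0d]; omega
      have hged : ∀ i : Fin L.length, 1 ≤ L.get (σ i) := fun i => hpos _ (L.get_mem _)
      calc (2 : ℕ) ≤ ∑ i ∈ ({⟨0, by omega⟩, ⟨1, by omega⟩} : Finset (Fin L.length)),
            L.get (σ i) := by
            rw [Finset.sum_insert (by simp only [Finset.mem_singleton, Fin.ne_iff_vne]; omega),
              Finset.sum_singleton]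
            have := hged ⟨0, by omega⟩
            have := hged ⟨1, by omega⟩
            omega
        _ ≤ _ := Finset.sum_le_sum_of_subset hsub
  calc d + 2 ≤ (∑ i ∈ Finset.univ.filter (fun i => i ≤ j0), L.get (σ i)) +
        (∑ i ∈ Finset.univ.filter (fun i => i ≤ j1), L.get (σ i)) := by omega
    _ = ∑ j ∈ ({j0, j1} : Finset (Fin L.length)),
          ∑ i ∈ Finset.univ.filter (fun i => i ≤ j), L.get (σ i) := by
        rw [Finset.sum_insert (by simpa using hne'), Finset.sum_singleton]
    _ ≤ _ := Finset.sum_le_sum_of_subset (Finset.subset_univ _)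

lemma sum_S_ge (d : ℕ) (hd : 2 ≤ d) (P : Nat.Partition d)
    (h1 : P ≠ Nat.Partition.indiscrete d) (h2 : P ≠ hook d hd)
    (σ : Equiv.Perm (Fin P.parts.toList.length)) :
    d + 2 ≤ ∑ j : Fin P.parts.toList.length,
      ∑ i ∈ Finset.univ.filter (fun i => i ≤ j), P.parts.toList.get (σ i) := by
  have hd0 : d ≠ 0 := by omega
  have hsum : P.parts.toList.sum = d := by
    rw [Multiset.sum_toList]; exact P.parts_sum
  have hpos : ∀ x ∈ P.parts.toList, 1 ≤ x :=
    fun x hx => P.parts_pos (by rwa [← Multiset.mem_toList])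
  have hcard : P.parts.toList.length = Multiset.card P.parts := Multiset.length_toList _
  have hk2 : 2 ≤ P.parts.toList.length := by
    rcases Nat.lt_or_ge P.parts.toList.length 2 with h | h
    · interval_cases h' : P.parts.toList.length
      · exfalso; apply hd0
        rw [← hsum, List.length_eq_zero_iff.1 h', List.sum_nil]
      · exfalso; apply h1
        obtain ⟨a, ha⟩ := Multiset.card_eq_one.1 (by omega : Multiset.card P.parts = 1)
        have had : a = d := by
          have := P.parts_sum; rw [ha] at this; simpa using this
        apply Nat.Partition.ext
        rw [ha, had, Nat.Partition.indiscrete_parts hd0]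
    · exact h
  have hno1 : P.parts.toList.length = 2 → ∀ x ∈ P.parts.toList, 2 ≤ x := by
    intro hlen x hx
    have hx1 : 1 ≤ x := hpos x hx
    by_contra hlt
    have hx1' : x = 1 := by omega
    subst hx1'
    apply h2
    have hone : (1 : ℕ) ∈ P.parts := by rwa [← Multiset.mem_toList]
    obtain ⟨a, b, hab⟩ := Multiset.card_eq_two.1 (by omega : Multiset.card P.parts = 2)
    apply Nat.Partition.ext
    have hs := P.parts_sum
    rw [hab] at hs hone
    simp only [Multiset.insert_eq_cons, Multiset.sum_cons, Multiset.sum_singleton] at hs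
    simp only [Multiset.insert_eq_cons, Multiset.mem_cons, Multiset.mem_singleton] at hone
    show P.parts = {d - 1, 1}
    rcases hone with h | h
    · rw [hab, h, Multiset.pair_comm]
      congr 1; omega
    · rw [hab, h]; congr 1; omega
  exact list_sum_S_ge d P.parts.toList hsum hpos hk2 hno1 σ

/-- For `d ≥ 2` there exist `C > 0` and `δ ∈ (0,1)` such that for all
`q ∈ (0,δ)`, the sum of `w_q(λ)` over all partitions `λ` of `d` with `λ ≠ (d)` and
`λ ≠ (d-1,1)` is at most `C·q^{d+2}`. -/
theorem zero_temp_stmt4 (d : ℕ) (hd : 2 ≤ d) :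
    ∃ C : ℝ, 0 < C ∧ ∃ δ ∈ Set.Ioo (0 : ℝ) 1, ∀ q ∈ Set.Ioo (0 : ℝ) δ,
      ∑ P ∈ Finset.univ.filter
          (fun P : Nat.Partition d => P ≠ Nat.Partition.indiscrete d ∧ P ≠ hook d hd),
        wq q P ≤ C * q ^ (d + 2) := by
  classical
  set S := Finset.univ.filter
      (fun P : Nat.Partition d => P ≠ Nat.Partition.indiscrete d ∧ P ≠ hook d hd) with hS
  set C : ℝ := (∑ P ∈ S,
      ((P.parts.toList.length).factorial * 2 ^ P.parts.toList.length : ℝ)) + 1 with hC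
  have hCpos : 0 < C := by
    have : (0:ℝ) ≤ ∑ P ∈ S, ((P.parts.toList.length).factorial * 2 ^ P.parts.toList.length : ℝ) :=
      Finset.sum_nonneg fun P _ => by positivity
    simp only [hC]; linarith
  refine ⟨C, hCpos, 1/2, ⟨by norm_num, by norm_num⟩, ?_⟩
  intro q hq
  obtain ⟨hq0, hq12⟩ := hq
  have hq1 : q < 1 := by linarith
  -- bound each wq
  have hbound : ∀ P ∈ S, wq q P ≤
      ((P.parts.toList.length).factorial * 2 ^ P.parts.toList.length : ℝ) * q ^ (d + 2) := by
    intro P hP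
    simp only [hS, Finset.mem_filter] at hP
    obtain ⟨-, h1, h2⟩ := hP
    set k := P.parts.toList.length with hk
    set f : Equiv.Perm (Fin k) → ℝ := fun σ =>
      ∏ j : Fin k,
        (q ^ (∑ i ∈ Finset.univ.filter (fun i => i ≤ j), P.parts.toList.get (σ i)) /
          (1 - q ^ (∑ i ∈ Finset.univ.filter (fun i => i ≤ j), P.parts.toList.get (σ i)))) with hf
    have hfac : ∀ (e : ℕ), 1 ≤ e →
        0 ≤ q ^ e / (1 - q ^ e) ∧ q ^ e / (1 - q ^ e) ≤ 2 * q ^ e := by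
      intro e he
      have h1e : q ^ e ≤ q := by
        calc q ^ e ≤ q ^ 1 := pow_le_pow_of_le_one hq0.le hq1.le he
          _ = q := pow_one q
      have hlow : (1:ℝ)/2 ≤ 1 - q ^ e := by linarith
      have hpe : 0 ≤ q ^ e := by positivity
      constructor
      · apply div_nonneg hpe; linarith
      · rw [div_le_iff₀ (by linarith)]
        nlinarith
    have hSj : ∀ (σ : Equiv.Perm (Fin k)) (j : Fin k),
        1 ≤ ∑ i ∈ Finset.univ.filter (fun i => i ≤ j), P.parts.toList.get (σ i) := by
      intro σ j
      have hmem : j ∈ Finset.univ.filter (fun i : Fin k => i ≤ j) := by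
        simp
      calc (1:ℕ) ≤ P.parts.toList.get (σ j) :=
            P.parts_pos (by rw [← Multiset.mem_toList]; exact List.get_mem _ _)
        _ ≤ _ := Finset.single_le_sum (f := fun i => P.parts.toList.get (σ i))
              (fun i _ => Nat.zero_le _) hmem
    have hterm : ∀ σ : Equiv.Perm (Fin k), f σ ≤ 2 ^ k * q ^ (d + 2) := by
      intro σ
      have step1 : f σ ≤ ∏ j : Fin k,
          (2 * q ^ (∑ i ∈ Finset.univ.filter (fun i => i ≤ j), P.parts.toList.get (σ i))) := by
        apply Finset.prod_le_prod
        · intro j _; exact (hfac _ (hSj σ j)).1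
        · intro j _; exact (hfac _ (hSj σ j)).2
      have step2 : (∏ j : Fin k,
          (2 * q ^ (∑ i ∈ Finset.univ.filter (fun i => i ≤ j), P.parts.toList.get (σ i))))
          = 2 ^ k * q ^ (∑ j : Fin k,
              ∑ i ∈ Finset.univ.filter (fun i => i ≤ j), P.parts.toList.get (σ i)) := by
        rw [Finset.prod_mul_distrib, Finset.prod_const, Finset.card_univ, Fintype.card_fin,
          Finset.prod_pow_eq_pow_sum]
      have step3 : q ^ (∑ j : Fin k,
          ∑ i ∈ Finset.univ.filter (fun i => i ≤ j), P.parts.toList.get (σ i)) ≤ q ^ (d + 2) :=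
        pow_le_pow_of_le_one hq0.le hq1.le (sum_S_ge d hd P h1 h2 σ)
      calc f σ ≤ _ := step1
        _ = _ := step2
        _ ≤ 2 ^ k * q ^ (d + 2) := by
            apply mul_le_mul_of_nonneg_left step3 (by positivity)
    have hfnonneg : ∀ σ : Equiv.Perm (Fin k), 0 ≤ f σ := by
      intro σ
      apply Finset.prod_nonneg
      intro j _
      exact (hfac _ (hSj σ j)).1
    have hsum : (∑ σ : Equiv.Perm (Fin k), f σ) ≤
        (k.factorial : ℝ) * (2 ^ k * q ^ (d + 2)) := by
      calc (∑ σ : Equiv.Perm (Fin k), f σ) ≤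
          ∑ _σ : Equiv.Perm (Fin k), 2 ^ k * q ^ (d + 2) :=
            Finset.sum_le_sum fun σ _ => hterm σ
        _ = (Fintype.card (Equiv.Perm (Fin k)) : ℝ) * (2 ^ k * q ^ (d + 2)) := by
            rw [Finset.sum_const, Finset.card_univ, nsmul_eq_mul]
        _ = (k.factorial : ℝ) * (2 ^ k * q ^ (d + 2)) := by
            rw [Fintype.card_perm, Fintype.card_fin]
    have haut : (1:ℝ) ≤ (autCard P : ℝ) := by
      have : 0 < autCard P := Finset.prod_pos fun i _ => Nat.factorial_pos _
      exact_mod_cast this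
    have hwq : wq q P = (1 / (autCard P : ℝ)) * ∑ σ : Equiv.Perm (Fin k), f σ := rfl
    rw [hwq]
    have hsumnn : 0 ≤ ∑ σ : Equiv.Perm (Fin k), f σ :=
      Finset.sum_nonneg fun σ _ => hfnonneg σ
    have h1a : (1 / (autCard P : ℝ)) * ∑ σ : Equiv.Perm (Fin k), f σ ≤
        ∑ σ : Equiv.Perm (Fin k), f σ := by
      have : 1 / (autCard P : ℝ) ≤ 1 := by
        rw [div_le_one (by linarith)]; exact haut
      nlinarith
    calc (1 / (autCard P : ℝ)) * ∑ σ : Equiv.Perm (Fin k), f σ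
        ≤ ∑ σ : Equiv.Perm (Fin k), f σ := h1a
      _ ≤ (k.factorial : ℝ) * (2 ^ k * q ^ (d + 2)) := hsum
      _ = ((k.factorial : ℝ) * 2 ^ k) * q ^ (d + 2) := by ring
  calc ∑ P ∈ S, wq q P ≤ ∑ P ∈ S,
        ((P.parts.toList.length).factorial * 2 ^ P.parts.toList.length : ℝ) * q ^ (d + 2) :=
        Finset.sum_le_sum hbound
    _ = (∑ P ∈ S, ((P.parts.toList.length).factorial * 2 ^ P.parts.toList.length : ℝ))
          * q ^ (d + 2) := by rw [← Finset.sum_mul]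
    _ ≤ C * q ^ (d + 2) := by
        apply mul_le_mul_of_nonneg_right _ (by positivity)
        simp only [hC]; linarith
end

section
/- Let d ≥ 2 and let f be any real-valued function on the set of partitions of d. Then there exist a constant C > 0 and δ ∈ (0,1) such that for all q ∈ (0, δ): | Σ_{λ ⊢ d} f(λ) · p(λ) · w_q(λ) − f((d)) · p(d) · q^d − f((d−1,1)) · p(d−1) · q^{d+1} | ≤ C · q^{d+2}. -/
open scoped Classical

/-- `p(k)`, the number of partitions of the nonnegative integer `k` (so `p(0) = 1`). -/
def pNum (k : ℕ) : ℕ := Fintype.card (Nat.Partition k)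

/-- `p(λ) = ∏ⱼ p(λⱼ)`, the product of partition numbers of the parts of `λ`. -/
def pOf {d : ℕ} (P : Nat.Partition d) : ℕ := (P.parts.map pNum).prod

/-! ### Auxiliary material -/

open Finset

/-- The inner sum-of-products appearing in `wq`, as a function of a list. -/
noncomputable def wl (q : ℝ) (l : List ℕ) : ℝ :=
  ∑ σ : Equiv.Perm (Fin l.length),
    ∏ j : Fin l.length,
      (q ^ (∑ i ∈ Finset.univ.filter (fun i => i ≤ j), l.get (σ i)) /
        (1 - q ^ (∑ i ∈ Finset.univ.filter (fun i => i ≤ j), l.get (σ i))))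

lemma wq_eq_wl (q : ℝ) {d : ℕ} (P : Nat.Partition d) {l : List ℕ}
    (h : P.parts.toList = l) : wq q P = (1 / (autCard P : ℝ)) * wl q l := by
  subst h; rfl

/-! #### elementary bounds on `q^n/(1-q^n)` -/

section frac

variable {q : ℝ} {n : ℕ}

lemma qpow_le_half (hq0 : 0 < q) (hq : q ≤ 1/2) (hn : n ≠ 0) : q ^ n ≤ 1/2 :=
  (pow_le_of_le_one hq0.le (hq.trans (by norm_num)) hn).trans hq

lemma qpow_le_q (hq0 : 0 < q) (hq : q ≤ 1/2) (hn : n ≠ 0) : q ^ n ≤ q :=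
  pow_le_of_le_one hq0.le (hq.trans (by norm_num)) hn

lemma frac_nonneg (hq0 : 0 < q) (hq : q ≤ 1/2) (hn : n ≠ 0) :
    0 ≤ q ^ n / (1 - q ^ n) := by
  have h1 := qpow_le_half hq0 hq hn
  have h2 : (0:ℝ) < q ^ n := pow_pos hq0 n
  apply div_nonneg h2.le
  linarith

lemma frac_lb (hq0 : 0 < q) (hq : q ≤ 1/2) (hn : n ≠ 0) :
    q ^ n ≤ q ^ n / (1 - q ^ n) := by
  have h1 := qpow_le_half hq0 hq hn
  have h2 : (0:ℝ) < q ^ n := pow_pos hq0 n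
  rw [le_div_iff₀ (by linarith)]
  nlinarith

lemma frac_ub2 (hq0 : 0 < q) (hq : q ≤ 1/2) (hn : n ≠ 0) :
    q ^ n / (1 - q ^ n) ≤ 2 * q ^ n := by
  have h1 := qpow_le_half hq0 hq hn
  have h2 : (0:ℝ) < q ^ n := pow_pos hq0 n
  rw [div_le_iff₀ (by linarith)]
  nlinarith

lemma frac_ub3 (hq0 : 0 < q) (hq : q ≤ 1/2) (hn : n ≠ 0) :
    q ^ n / (1 - q ^ n) ≤ q ^ n * (1 + 2 * q) := by
  have h1 := qpow_le_half hq0 hq hn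
  have h3 := qpow_le_q hq0 hq hn
  have h2 : (0:ℝ) < q ^ n := pow_pos hq0 n
  rw [div_le_iff₀ (by linarith)]
  have hk : q ^ n * (1 + 2 * q) ≤ 2 * q := by
    nlinarith [mul_le_mul_of_nonneg_right h3 (show (0:ℝ) ≤ 1 + 2 * q by linarith),
      mul_le_mul_of_nonneg_left hq hq0.le]
  have hX : (1:ℝ) ≤ (1 + 2 * q) * (1 - q ^ n) := by nlinarith
  nlinarith [mul_le_mul_of_nonneg_left hX h2.le]

lemma frac_fine (hq0 : 0 < q) (hq : q ≤ 1/2) (hn : n ≠ 0) :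
    q ^ n / (1 - q ^ n) ≤ q ^ n + 2 * q ^ (2 * n) := by
  have h1 := qpow_le_half hq0 hq hn
  have h2 : (0:ℝ) < q ^ n := pow_pos hq0 n
  have h4 : q ^ (2 * n) = q ^ n * q ^ n := by rw [two_mul, pow_add]
  rw [div_le_iff₀ (by linarith), h4]
  nlinarith

end frac

/-! #### partial sums over permutations -/

lemma S_ge {l : List ℕ} {m : ℕ} (hl : ∀ x ∈ l, m ≤ x)
    (σ : Equiv.Perm (Fin l.length)) (j : Fin l.length) :
    (j.val + 1) * m ≤ ∑ i ∈ Finset.univ.filter (fun i => i ≤ j), l.get (σ i) := by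
  have h1 : Finset.univ.filter (fun i => i ≤ j) = Finset.Iic j := by ext i; simp
  rw [h1]
  calc (j.val + 1) * m = ∑ _i ∈ Finset.Iic j, m := by
        rw [Finset.sum_const, Fin.card_Iic, smul_eq_mul]
    _ ≤ _ := Finset.sum_le_sum fun i _ => hl _ (List.get_mem l (σ i))

lemma S_pos {l : List ℕ} (hl : ∀ x ∈ l, 1 ≤ x)
    (σ : Equiv.Perm (Fin l.length)) (j : Fin l.length) :
    ∑ i ∈ Finset.univ.filter (fun i => i ≤ j), l.get (σ i) ≠ 0 := by
  have := S_ge hl σ j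
  omega

lemma S_last {l : List ℕ} (hk : 0 < l.length) (σ : Equiv.Perm (Fin l.length)) :
    ∑ i ∈ Finset.univ.filter
        (fun i => i ≤ (⟨l.length - 1, by omega⟩ : Fin l.length)), l.get (σ i)
      = l.sum := by
  rw [Finset.filter_true_of_mem, Equiv.sum_comp σ (l.get)]
  · simpa using Fin.sum_univ_get l
  · intro i _
    rw [Fin.le_def]
    have := i.isLt
    simp only []
    omega

/-! #### per-permutation product bounds -/

lemma term_nonneg {q : ℝ} (hq0 : 0 < q) (hq : q ≤ 1/2) {l : List ℕ}
    (hl : ∀ x ∈ l, 1 ≤ x) (σ : Equiv.Perm (Fin l.length)) :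
    0 ≤ ∏ j : Fin l.length,
      (q ^ (∑ i ∈ Finset.univ.filter (fun i => i ≤ j), l.get (σ i)) /
        (1 - q ^ (∑ i ∈ Finset.univ.filter (fun i => i ≤ j), l.get (σ i)))) :=
  Finset.prod_nonneg fun j _ => frac_nonneg hq0 hq (S_pos hl σ j)

lemma term_le {q : ℝ} (hq0 : 0 < q) (hq : q ≤ 1/2) {l : List ℕ}
    (hl : ∀ x ∈ l, 1 ≤ x) (σ : Equiv.Perm (Fin l.length)) :
    (∏ j : Fin l.length,
      (q ^ (∑ i ∈ Finset.univ.filter (fun i => i ≤ j), l.get (σ i)) /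
        (1 - q ^ (∑ i ∈ Finset.univ.filter (fun i => i ≤ j), l.get (σ i)))))
      ≤ 2 ^ l.length *
        q ^ (∑ j : Fin l.length, ∑ i ∈ Finset.univ.filter (fun i => i ≤ j), l.get (σ i)) := by
  have h1 : (∏ j : Fin l.length,
      (q ^ (∑ i ∈ Finset.univ.filter (fun i => i ≤ j), l.get (σ i)) /
        (1 - q ^ (∑ i ∈ Finset.univ.filter (fun i => i ≤ j), l.get (σ i)))))
      ≤ ∏ j : Fin l.length,
        (2 * q ^ (∑ i ∈ Finset.univ.filter (fun i => i ≤ j), l.get (σ i))) := by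
    apply Finset.prod_le_prod
    · intro j _; exact frac_nonneg hq0 hq (S_pos hl σ j)
    · intro j _; exact frac_ub2 hq0 hq (S_pos hl σ j)
  refine h1.trans (le_of_eq ?_)
  rw [Finset.prod_mul_distrib, Finset.prod_const, Finset.prod_pow_eq_pow_sum]
  simp

/-! #### the exponent lower bound for generic partitions -/

lemma N_ge {d : ℕ} (hd : 2 ≤ d) (P : Nat.Partition d)
    (hA : P ≠ Nat.Partition.indiscrete d) (hB : P ≠ hook d hd)
    (σ : Equiv.Perm (Fin P.parts.toList.length)) :
    d + 2 ≤ ∑ j : Fin P.parts.toList.length,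
      ∑ i ∈ Finset.univ.filter (fun i => i ≤ j), P.parts.toList.get (σ i) := by
  have hsum : P.parts.toList.sum = d := by
    rw [Multiset.sum_toList]; exact P.parts_sum
  have hpos : ∀ x ∈ P.parts.toList, 1 ≤ x := fun x hx =>
    P.parts_pos (Multiset.mem_toList.mp hx)
  have hlen : P.parts.toList.length = Multiset.card P.parts := Multiset.length_toList _
  rcases Nat.lt_or_ge (Multiset.card P.parts) 3 with hc | hc
  · interval_cases hcard : Multiset.card P.parts
    · exfalso
      have h0 : P.parts = 0 := Multiset.card_eq_zero.mp hcard
      have := P.parts_sum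
      rw [h0] at this
      simp at this
      omega
    · exfalso
      obtain ⟨x, hx⟩ := Multiset.card_eq_one.mp hcard
      have hxd : x = d := by
        have := P.parts_sum
        rw [hx, Multiset.sum_singleton] at this
        exact this
      apply hA
      apply Nat.Partition.ext
      rw [hx, hxd, Nat.Partition.indiscrete_parts (by omega)]
    · -- two parts
      obtain ⟨x, y, hxy⟩ := Multiset.card_eq_two.mp hcard
      have hsum2 : x + y = d := by
        have := P.parts_sum
        rw [hxy] at this
        simpa [Multiset.insert_eq_cons] using this
      have hx1 : 1 ≤ x := P.parts_pos (by rw [hxy]; simp)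
      have hy1 : 1 ≤ y := P.parts_pos (by rw [hxy]; simp)
      by_cases hone : x = 1 ∨ y = 1
      · exfalso
        apply hB
        apply Nat.Partition.ext
        show P.parts = {d - 1, 1}
        rcases hone with rfl | rfl
        · rw [hxy, show y = d - 1 by omega, Multiset.pair_comm]
        · rw [hxy, show x = d - 1 by omega]
      · push_neg at hone
        have h2 : ∀ z ∈ P.parts.toList, 2 ≤ z := by
          intro z hz
          have hz' : z ∈ P.parts := Multiset.mem_toList.mp hz
          rw [hxy] at hz'
          simp [Multiset.insert_eq_cons] at hz'
          rcases hz' with rfl | rfl <;> omega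
        have hk : P.parts.toList.length = 2 := by omega
        have hk0 : 0 < P.parts.toList.length := by omega
        set j0 : Fin P.parts.toList.length := ⟨0, by omega⟩ with hj0
        set j1 : Fin P.parts.toList.length := ⟨P.parts.toList.length - 1, by omega⟩ with hj1
        have hne : j0 ≠ j1 := by
          simp only [hj0, hj1, Ne, Fin.mk.injEq]
          omega
        have hsub : ({j0, j1} : Finset (Fin P.parts.toList.length)) ⊆ Finset.univ :=
          Finset.subset_univ _
        calc d + 2 = 2 + d := by omega
          _ ≤ (∑ i ∈ Finset.univ.filter (fun i => i ≤ j0), P.parts.toList.get (σ i))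
              + (∑ i ∈ Finset.univ.filter (fun i => i ≤ j1), P.parts.toList.get (σ i)) := by
              have hb0 : 2 ≤ ∑ i ∈ Finset.univ.filter (fun i => i ≤ j0),
                  P.parts.toList.get (σ i) := by
                have := S_ge h2 σ j0
                simpa [hj0] using this
              have hb1 : d ≤ ∑ i ∈ Finset.univ.filter (fun i => i ≤ j1),
                  P.parts.toList.get (σ i) := by
                rw [S_last hk0 σ, hsum]
              omega
          _ ≤ _ := by
              have h := Finset.sum_le_sum_of_subset
                (f := fun j => ∑ i ∈ Finset.univ.filter (fun i => i ≤ j),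
                  P.parts.toList.get (σ i)) hsub
              rw [Finset.sum_pair hne] at h
              exact h
  · -- at least three parts
    have hk : 3 ≤ P.parts.toList.length := by omega
    set j0 : Fin P.parts.toList.length := ⟨0, by omega⟩ with hj0
    set j1 : Fin P.parts.toList.length := ⟨1, by omega⟩ with hj1
    set j2 : Fin P.parts.toList.length := ⟨P.parts.toList.length - 1, by omega⟩ with hj2
    have hk0 : 0 < P.parts.toList.length := by omega
    have hne01 : j0 ≠ j1 := by simp only [hj0, hj1, Ne, Fin.mk.injEq]; omega
    have hne02 : j0 ≠ j2 := by simp only [hj0, hj2, Ne, Fin.mk.injEq]; omega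
    have hne12 : j1 ≠ j2 := by simp only [hj1, hj2, Ne, Fin.mk.injEq]; omega
    have hb0 : 1 ≤ ∑ i ∈ Finset.univ.filter (fun i => i ≤ j0), P.parts.toList.get (σ i) := by
      have := S_ge hpos σ j0
      simpa [hj0] using this
    have hb1 : 2 ≤ ∑ i ∈ Finset.univ.filter (fun i => i ≤ j1), P.parts.toList.get (σ i) := by
      have := S_ge hpos σ j1
      simpa [hj1] using this
    have hb2 : d ≤ ∑ i ∈ Finset.univ.filter (fun i => i ≤ j2), P.parts.toList.get (σ i) := by
      rw [S_last hk0 σ, hsum]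
    calc d + 2 ≤ (∑ i ∈ Finset.univ.filter (fun i => i ≤ j0), P.parts.toList.get (σ i))
          + ((∑ i ∈ Finset.univ.filter (fun i => i ≤ j1), P.parts.toList.get (σ i))
          + (∑ i ∈ Finset.univ.filter (fun i => i ≤ j2), P.parts.toList.get (σ i))) := by omega
      _ ≤ _ := by
          have h := Finset.sum_le_sum_of_subset
            (f := fun j => ∑ i ∈ Finset.univ.filter (fun i => i ≤ j),
              P.parts.toList.get (σ i))
            (Finset.subset_univ ({j0, j1, j2} : Finset (Fin P.parts.toList.length)))
          rw [Finset.sum_insert (by simp [hne01, hne02]), Finset.sum_pair hne12] at h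
          exact h

/-! #### generic partition bound -/

lemma autCard_pos {d : ℕ} (P : Nat.Partition d) : 0 < autCard P :=
  Finset.prod_pos fun i _ => Nat.factorial_pos _

lemma wq_nonneg {q : ℝ} (hq0 : 0 < q) (hq : q ≤ 1/2) {d : ℕ} (P : Nat.Partition d) :
    0 ≤ wq q P := by
  have hpos : ∀ x ∈ P.parts.toList, 1 ≤ x := fun x hx =>
    P.parts_pos (Multiset.mem_toList.mp hx)
  apply mul_nonneg
  · positivity
  · exact Finset.sum_nonneg fun σ _ => term_nonneg hq0 hq hpos σ

lemma wq_generic_le {q : ℝ} (hq0 : 0 < q) (hq : q ≤ 1/2) (hq1 : q ≤ 1) {d : ℕ} (hd : 2 ≤ d)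
    (P : Nat.Partition d) (hA : P ≠ Nat.Partition.indiscrete d) (hB : P ≠ hook d hd) :
    wq q P ≤ (P.parts.toList.length.factorial * 2 ^ P.parts.toList.length : ℕ) * q ^ (d + 2) := by
  have hpos : ∀ x ∈ P.parts.toList, 1 ≤ x := fun x hx =>
    P.parts_pos (Multiset.mem_toList.mp hx)
  have haut : (1:ℝ) ≤ (autCard P : ℝ) := by exact_mod_cast autCard_pos P
  have hsum_le : (∑ σ : Equiv.Perm (Fin P.parts.toList.length),
      ∏ j : Fin P.parts.toList.length,
        (q ^ (∑ i ∈ Finset.univ.filter (fun i => i ≤ j), P.parts.toList.get (σ i)) /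
          (1 - q ^ (∑ i ∈ Finset.univ.filter (fun i => i ≤ j), P.parts.toList.get (σ i)))))
      ≤ (P.parts.toList.length.factorial * 2 ^ P.parts.toList.length : ℕ) * q ^ (d + 2) := by
    have hterm : ∀ σ : Equiv.Perm (Fin P.parts.toList.length),
        (∏ j : Fin P.parts.toList.length,
          (q ^ (∑ i ∈ Finset.univ.filter (fun i => i ≤ j), P.parts.toList.get (σ i)) /
            (1 - q ^ (∑ i ∈ Finset.univ.filter (fun i => i ≤ j), P.parts.toList.get (σ i)))))
          ≤ 2 ^ P.parts.toList.length * q ^ (d + 2) := by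
      intro σ
      refine (term_le hq0 hq hpos σ).trans ?_
      have hN := N_ge hd P hA hB σ
      have : q ^ (∑ j : Fin P.parts.toList.length,
          ∑ i ∈ Finset.univ.filter (fun i => i ≤ j), P.parts.toList.get (σ i)) ≤ q ^ (d + 2) :=
        pow_le_pow_of_le_one hq0.le hq1 hN
      nlinarith [pow_pos hq0 (d+2), pow_pos (show (0:ℝ) < 2 by norm_num) P.parts.toList.length]
    calc _ ≤ ∑ _σ : Equiv.Perm (Fin P.parts.toList.length),
          (2 ^ P.parts.toList.length * q ^ (d + 2)) :=
          Finset.sum_le_sum fun σ _ => hterm σ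
      _ = (P.parts.toList.length.factorial * 2 ^ P.parts.toList.length : ℕ) * q ^ (d + 2) := by
          rw [Finset.sum_const, Finset.card_univ, Fintype.card_perm, Fintype.card_fin]
          push_cast
          ring
  rw [wq]
  have hsnn : (0:ℝ) ≤ ∑ σ : Equiv.Perm (Fin P.parts.toList.length),
      ∏ j : Fin P.parts.toList.length,
        (q ^ (∑ i ∈ Finset.univ.filter (fun i => i ≤ j), P.parts.toList.get (σ i)) /
          (1 - q ^ (∑ i ∈ Finset.univ.filter (fun i => i ≤ j), P.parts.toList.get (σ i)))) :=
    Finset.sum_nonneg fun σ _ => term_nonneg hq0 hq hpos σ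
  calc (1 / (autCard P : ℝ)) * _ ≤ 1 * _ := by
        apply mul_le_mul_of_nonneg_right _ hsnn
        rw [div_le_one (by linarith)]
        exact haut
    _ ≤ _ := by rw [one_mul]; exact hsum_le

/-! #### explicit small cases -/

lemma fin2cases (i : Fin 2) : i = 0 ∨ i = 1 := by
  rcases i with ⟨v, hv⟩
  interval_cases v
  · exact Or.inl rfl
  · exact Or.inr rfl

lemma perm2cases (σ : Equiv.Perm (Fin 2)) : σ = 1 ∨ σ = Equiv.swap 0 1 := by
  by_cases h : σ 0 = 0
  · left
    apply Equiv.ext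
    intro i
    rcases fin2cases i with rfl | rfl
    · simpa using h
    · have h1 : σ 1 ≠ 0 := fun hc => one_ne_zero (σ.injective (hc.trans h.symm))
      simpa using Fin.eq_one_of_ne_zero _ h1
  · right
    have h0 : σ 0 = 1 := Fin.eq_one_of_ne_zero _ h
    apply Equiv.ext
    intro i
    rcases fin2cases i with rfl | rfl
    · simpa [Equiv.swap_apply_left] using h0
    · have h1 : σ 1 ≠ 1 := by
        intro hc
        have : (1 : Fin 2) = 0 := σ.injective (hc.trans h0.symm)
        simp at this
      have : σ 1 = 0 := by
        rcases fin2cases (σ 1) with h2 | h2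
        · exact h2
        · exact absurd h2 h1
      simpa [Equiv.swap_apply_right] using this

lemma permuniv2 : (Finset.univ : Finset (Equiv.Perm (Fin 2))) = {1, Equiv.swap 0 1} := by
  ext σ
  simp only [Finset.mem_univ, Finset.mem_insert, Finset.mem_singleton, true_iff]
  exact perm2cases σ

lemma swap_ne : (1 : Equiv.Perm (Fin 2)) ∉ ({Equiv.swap 0 1} : Finset (Equiv.Perm (Fin 2))) := by
  simp only [Finset.mem_singleton]
  intro h
  have := congrArg (fun e : Equiv.Perm (Fin 2) => e 0) h
  simp [Equiv.swap_apply_left] at this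

lemma filter_le_zero_fin2 : (Finset.univ.filter (fun i : Fin 2 => i ≤ 0)) = {0} := by
  ext i
  simp [Fin.le_zero_iff]

lemma filter_le_one_fin2 : (Finset.univ.filter (fun i : Fin 2 => i ≤ 1)) = Finset.univ := by
  apply Finset.filter_true_of_mem
  intro i _
  rcases fin2cases i with rfl | rfl <;> simp

lemma wl_single (q : ℝ) (a : ℕ) : wl q [a] = q ^ a / (1 - q ^ a) := by
  rw [wl]
  show (∑ σ : Equiv.Perm (Fin 1),
    ∏ j : Fin 1,
      (q ^ (∑ i ∈ Finset.univ.filter (fun i => i ≤ j), [a].get (σ i)) /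
        (1 - q ^ (∑ i ∈ Finset.univ.filter (fun i => i ≤ j), [a].get (σ i))))) = _
  rw [Finset.univ_unique, Finset.sum_singleton, Fin.prod_univ_one]
  have hfs : Finset.univ.filter (fun i : Fin 1 => i ≤ 0) = Finset.univ :=
    Finset.filter_true_of_mem fun i _ => by simp [Subsingleton.elim i 0]
  rw [hfs, Finset.univ_unique, Finset.sum_singleton]
  rfl

lemma wl_pair (q : ℝ) (a b : ℕ) :
    wl q [a, b] = q ^ a / (1 - q ^ a) * (q ^ (a + b) / (1 - q ^ (a + b)))
      + q ^ b / (1 - q ^ b) * (q ^ (a + b) / (1 - q ^ (a + b))) := by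
  rw [wl]
  show (∑ σ : Equiv.Perm (Fin 2),
    ∏ j : Fin 2,
      (q ^ (∑ i ∈ Finset.univ.filter (fun i => i ≤ j), [a, b].get (σ i)) /
        (1 - q ^ (∑ i ∈ Finset.univ.filter (fun i => i ≤ j), [a, b].get (σ i))))) = _
  rw [permuniv2, Finset.sum_insert swap_ne, Finset.sum_singleton]
  rw [Fin.prod_univ_two, Fin.prod_univ_two]
  rw [filter_le_zero_fin2, filter_le_one_fin2]
  rw [Finset.sum_singleton]
  have huniv : ∀ σ : Equiv.Perm (Fin 2), ∑ i : Fin 2, [a, b].get (σ i) = a + b := by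
    intro σ
    rw [Equiv.sum_comp σ ([a, b].get)]
    simp [Fin.sum_univ_two]
  rw [huniv, huniv]
  simp [Equiv.swap_apply_left]

/-! #### the two leading partitions -/

lemma indiscrete_toList {d : ℕ} (hd : d ≠ 0) :
    (Nat.Partition.indiscrete d).parts.toList = [d] := by
  rw [Nat.Partition.indiscrete_parts hd, Multiset.toList_singleton]

lemma autCard_indiscrete {d : ℕ} (hd : d ≠ 0) :
    autCard (Nat.Partition.indiscrete d) = 1 := by
  rw [autCard, Nat.Partition.indiscrete_parts hd]
  simp

lemma wq_indiscrete (q : ℝ) {d : ℕ} (hd : d ≠ 0) :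
    wq q (Nat.Partition.indiscrete d) = q ^ d / (1 - q ^ d) := by
  rw [wq_eq_wl q _ (indiscrete_toList hd), wl_single, autCard_indiscrete hd]
  norm_num

lemma indiscrete_bound {q : ℝ} (hq0 : 0 < q) (hq : q ≤ 1/2) {d : ℕ} (hd : 2 ≤ d) :
    |wq q (Nat.Partition.indiscrete d) - q ^ d| ≤ 2 * q ^ (d + 2) := by
  rw [wq_indiscrete q (by omega)]
  have h1 := frac_lb hq0 hq (show d ≠ 0 by omega)
  have h2 := frac_fine hq0 hq (show d ≠ 0 by omega)
  have h3 : q ^ (2 * d) ≤ q ^ (d + 2) :=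
    pow_le_pow_of_le_one hq0.le (by linarith) (by omega)
  rw [abs_le]
  constructor
  · have : (0:ℝ) < q ^ (d + 2) := pow_pos hq0 _
    linarith
  · linarith

/-! #### hook analysis -/

lemma hook_parts {d : ℕ} (hd : 2 ≤ d) : (hook d hd).parts = {d - 1, 1} := rfl

lemma hook_bound {q : ℝ} (hq0 : 0 < q) (hq : q ≤ 1/2) {d : ℕ} (hd : 2 ≤ d) :
    |wq q (hook d hd) - q ^ (d + 1)| ≤ 10 * q ^ (d + 2) := by
  -- extract the two-element list
  have hlen : (hook d hd).parts.toList.length = 2 := by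
    rw [Multiset.length_toList, hook_parts]
    rfl
  obtain ⟨a, b, hab⟩ := List.length_eq_two.mp hlen
  have hmset : ({a, b} : Multiset ℕ) = {d - 1, 1} := by
    have h := Multiset.coe_toList (hook d hd).parts
    rw [hab] at h
    exact (show ({a, b} : Multiset ℕ) = ↑[a, b] from rfl).trans (h.trans (hook_parts hd))
  have habd : a + b = d := by
    have h1 : ({a, b} : Multiset ℕ).sum = ({d - 1, 1} : Multiset ℕ).sum := by rw [hmset]
    simp [Multiset.insert_eq_cons] at h1
    omega
  have hcases : (a = d - 1 ∧ b = 1) ∨ (a = 1 ∧ b = d - 1) := by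
    have h1 : a ∈ ({d - 1, 1} : Multiset ℕ) := by rw [← hmset]; simp
    simp [Multiset.insert_eq_cons] at h1
    rcases h1 with rfl | rfl
    · left; exact ⟨rfl, by omega⟩
    · right; exact ⟨rfl, by omega⟩
  -- aut card
  have x1 : q ≤ q ^ 1 / (1 - q ^ 1) := by
    simpa using frac_lb hq0 hq (one_ne_zero)
  have x1' : q ^ 1 / (1 - q ^ 1) ≤ q * (1 + 2 * q) := by
    simpa using frac_ub3 hq0 hq (one_ne_zero)
  have xd : q ^ d ≤ q ^ d / (1 - q ^ d) := frac_lb hq0 hq (by omega)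
  have xd' : q ^ d / (1 - q ^ d) ≤ q ^ d * (1 + 2 * q) := frac_ub3 hq0 hq (by omega)
  have hq1 : q ≤ 1 := by linarith
  -- main term bounds: u = x_1 * x_d
  have humain_lb : q ^ (d + 1) ≤ q ^ 1 / (1 - q ^ 1) * (q ^ d / (1 - q ^ d)) := by
    have := mul_le_mul x1 xd (pow_nonneg hq0.le d) (frac_nonneg hq0 hq one_ne_zero)
    calc q ^ (d + 1) = q * q ^ d := by ring
      _ ≤ _ := this
  have humain_ub : q ^ 1 / (1 - q ^ 1) * (q ^ d / (1 - q ^ d))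
      ≤ q ^ (d + 1) + 6 * q ^ (d + 2) := by
    have hnn : (0:ℝ) ≤ q ^ 1 / (1 - q ^ 1) := frac_nonneg hq0 hq one_ne_zero
    have h5 := mul_le_mul x1' xd' (frac_nonneg hq0 hq (show d ≠ 0 by omega))
      (by positivity)
    refine ((mul_le_mul_of_nonneg_right x1' (frac_nonneg hq0 hq (show d ≠ 0 by omega))).trans
      ((mul_le_mul_of_nonneg_left xd' (by positivity)).trans ?_))
    have hqd2 : q ^ (d + 2) = q ^ d * q ^ 2 := by ring
    have hqd1 : q ^ (d + 1) = q ^ d * q := by ring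
    have hpd : (0:ℝ) ≤ q ^ d := by positivity
    nlinarith [sq_nonneg q, pow_pos hq0 d]
  rcases eq_or_lt_of_le hd with hd2 | hd3
  · -- d = 2 : parts are {1, 1}
    have hd2' : d = 2 := hd2.symm
    subst hd2'
    have ha1 : a = 1 := by rcases hcases with ⟨h1, h2⟩ | ⟨h1, h2⟩ <;> omega
    have hb1 : b = 1 := by rcases hcases with ⟨h1, h2⟩ | ⟨h1, h2⟩ <;> omega
    subst ha1; subst hb1
    have haut : autCard (hook 2 hd) = 2 := by
      rw [autCard, hook_parts]
      norm_num
    rw [wq_eq_wl q _ hab, wl_pair, haut]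
    have : (1:ℝ) / (2:ℕ) * (q ^ 1 / (1 - q ^ 1) * (q ^ (1 + 1) / (1 - q ^ (1 + 1)))
        + q ^ 1 / (1 - q ^ 1) * (q ^ (1 + 1) / (1 - q ^ (1 + 1))))
        = q ^ 1 / (1 - q ^ 1) * (q ^ 2 / (1 - q ^ 2)) := by
      norm_num
      ring
    rw [this]
    rw [abs_le]
    constructor
    · have h6 : (0:ℝ) < q ^ (2 + 2) := pow_pos hq0 _
      have := humain_lb
      norm_num at this ⊢
      nlinarith
    · have := humain_ub
      norm_num at this ⊢
      nlinarith
  · -- d ≥ 3 : parts are distinct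
    have hd1ne : d - 1 ≠ 1 := by omega
    have haut : autCard (hook d hd) = 1 := by
      rw [autCard, hook_parts hd]
      rw [show ({d - 1, 1} : Multiset ℕ) = (d - 1) ::ₘ {1} from rfl]
      rw [Multiset.toFinset_cons, Multiset.toFinset_singleton]
      rw [Finset.prod_insert (by simp [hd1ne])]
      rw [Finset.prod_singleton]
      simp [Multiset.count_cons, Multiset.count_singleton, hd1ne]
    -- the second term bound
    have hvb : q ^ (d-1) / (1 - q ^ (d-1)) * (q ^ d / (1 - q ^ d)) ≤ 4 * q ^ (d + 2) := by
      have h1 := frac_ub2 hq0 hq (show d - 1 ≠ 0 by omega)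
      have h2 := frac_ub2 hq0 hq (show d ≠ 0 by omega)
      have h3 := mul_le_mul h1 h2 (frac_nonneg hq0 hq (show d ≠ 0 by omega)) (by positivity)
      refine h3.trans ?_
      have h4 : 2 * q ^ (d - 1) * (2 * q ^ d) = 4 * q ^ (d - 1 + d) := by ring
      rw [h4]
      have h5 : q ^ (d - 1 + d) ≤ q ^ (d + 2) :=
        pow_le_pow_of_le_one hq0.le hq1 (by omega)
      linarith
    have hvnn : 0 ≤ q ^ (d-1) / (1 - q ^ (d-1)) * (q ^ d / (1 - q ^ d)) := by
      have := frac_nonneg hq0 hq (show d - 1 ≠ 0 by omega)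
      have := frac_nonneg hq0 hq (show d ≠ 0 by omega)
      positivity
    rw [wq_eq_wl q _ hab, wl_pair, haut]
    rcases hcases with ⟨ha, hb⟩ | ⟨ha, hb⟩ <;> subst ha <;> subst hb
    · -- a = d-1, b = 1
      rw [show d - 1 + 1 = d by omega]
      rw [abs_le]
      have e1 : (1:ℝ) / (1:ℕ) = 1 := by norm_num
      rw [e1, one_mul]
      constructor
      · have h6 : (0:ℝ) < q ^ (d + 2) := pow_pos hq0 _
        nlinarith [humain_lb, hvnn]
      · nlinarith [humain_ub, hvb]
    · -- a = 1, b = d-1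
      rw [show 1 + (d - 1) = d by omega]
      rw [abs_le]
      have e1 : (1:ℝ) / (1:ℕ) = 1 := by norm_num
      rw [e1, one_mul]
      constructor
      · have h6 : (0:ℝ) < q ^ (d + 2) := pow_pos hq0 _
        nlinarith [humain_lb, hvnn]
      · nlinarith [humain_ub, hvb]

/-! #### partition-number facts -/

lemma pNum_one : pNum 1 = 1 := by
  rw [pNum, Fintype.card_eq_one_iff]
  refine ⟨Nat.Partition.indiscrete 1, fun P => ?_⟩
  apply Nat.Partition.ext
  rw [Nat.Partition.indiscrete_parts one_ne_zero]
  have hsum := P.parts_sum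
  have hcard : Multiset.card P.parts ≤ 1 := by
    have := Multiset.card_nsmul_le_sum (fun x hx => P.parts_pos hx)
    simpa [hsum] using this
  interval_cases h : Multiset.card P.parts
  · exfalso
    have h0 : P.parts = 0 := Multiset.card_eq_zero.mp h
    rw [h0] at hsum
    simp at hsum
  · obtain ⟨x, hx⟩ := Multiset.card_eq_one.mp h
    rw [hx] at hsum ⊢
    rw [Multiset.sum_singleton] at hsum
    rw [hsum]

lemma pOf_indiscrete {d : ℕ} (hd : d ≠ 0) :
    pOf (Nat.Partition.indiscrete d) = pNum d := by
  rw [pOf, Nat.Partition.indiscrete_parts hd, Multiset.map_singleton, Multiset.prod_singleton]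

lemma pOf_hook {d : ℕ} (hd : 2 ≤ d) : pOf (hook d hd) = pNum (d - 1) := by
  rw [pOf, hook_parts]
  simp [Multiset.insert_eq_cons, pNum_one]

lemma indiscrete_ne_hook {d : ℕ} (hd : 2 ≤ d) : Nat.Partition.indiscrete d ≠ hook d hd := by
  intro h
  have h1 : (Nat.Partition.indiscrete d).parts = (hook d hd).parts := by rw [h]
  rw [Nat.Partition.indiscrete_parts (by omega), hook_parts] at h1
  have := congrArg Multiset.card h1
  simp [Multiset.insert_eq_cons] at this

set_option maxHeartbeats 1600000 in
/-- For `d ≥ 2` and any real-valued function `f` on partitions of `d`,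
there exist `C > 0` and `δ ∈ (0,1)` such that for all `q ∈ (0,δ)`:
`|Σ_{λ⊢d} f(λ)·p(λ)·w_q(λ) - f((d))·p(d)·q^d - f((d-1,1))·p(d-1)·q^{d+1}| ≤ C·q^{d+2}`. -/
theorem zero_temp_stmt7 (d : ℕ) (hd : 2 ≤ d) (f : Nat.Partition d → ℝ) :
    ∃ C : ℝ, 0 < C ∧ ∃ δ ∈ Set.Ioo (0 : ℝ) 1, ∀ q ∈ Set.Ioo (0 : ℝ) δ,
      |(∑ P : Nat.Partition d, f P * (pOf P : ℝ) * wq q P)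
        - f (Nat.Partition.indiscrete d) * (pNum d : ℝ) * q ^ d
        - f (hook d hd) * (pNum (d - 1) : ℝ) * q ^ (d + 1)| ≤ C * q ^ (d + 2) := by
  classical
  set A := Nat.Partition.indiscrete d with hA
  set B := hook d hd with hB
  have hAB : A ≠ B := indiscrete_ne_hook hd
  set c : Nat.Partition d → ℝ := fun P => |f P| * (pOf P : ℝ) *
    (if P = A then 2 else if P = B then 10
      else ((P.parts.toList.length.factorial * 2 ^ P.parts.toList.length : ℕ) : ℝ)) with hc
  have hcnn : ∀ P, 0 ≤ c P := by
    intro P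
    rw [hc]
    apply mul_nonneg (mul_nonneg (abs_nonneg _) (Nat.cast_nonneg _))
    split_ifs <;> norm_num
  refine ⟨1 + ∑ P : Nat.Partition d, c P, by positivity, 1/2, ⟨by norm_num, by norm_num⟩, ?_⟩
  intro q hq
  obtain ⟨hq0, hqlt⟩ := hq
  have hq2 : q ≤ 1/2 := hqlt.le
  have hq1 : q ≤ 1 := by linarith
  have hrw : (∑ P : Nat.Partition d, f P * (pOf P : ℝ) * wq q P)
      - f A * (pNum d : ℝ) * q ^ d - f B * (pNum (d - 1) : ℝ) * q ^ (d + 1)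
      = ∑ P : Nat.Partition d,
        (f P * (pOf P : ℝ) * wq q P
          - (if P = A then f A * (pNum d : ℝ) * q ^ d else 0)
          - (if P = B then f B * (pNum (d - 1) : ℝ) * q ^ (d + 1) else 0)) := by
    rw [Finset.sum_sub_distrib, Finset.sum_sub_distrib]
    rw [Finset.sum_ite_eq' Finset.univ A (fun _ => f A * (pNum d : ℝ) * q ^ d)]
    rw [Finset.sum_ite_eq' Finset.univ B (fun _ => f B * (pNum (d - 1) : ℝ) * q ^ (d + 1))]
    simp
  rw [hrw]
  refine (Finset.abs_sum_le_sum_abs _ _).trans ?_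
  have hbound : ∀ P : Nat.Partition d,
      |f P * (pOf P : ℝ) * wq q P
        - (if P = A then f A * (pNum d : ℝ) * q ^ d else 0)
        - (if P = B then f B * (pNum (d - 1) : ℝ) * q ^ (d + 1) else 0)|
      ≤ c P * q ^ (d + 2) := by
    intro P
    by_cases hPA : P = A
    · subst hPA
      have hcA : c A = |f A| * (pOf A : ℝ) * 2 := by simp [hc]
      rw [hcA, if_pos rfl, if_neg hAB]
      have hpof : (pOf A : ℝ) = (pNum d : ℝ) := by
        rw [hA, pOf_indiscrete (show d ≠ 0 by omega)]
      rw [sub_zero, hpof]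
      have heq : f A * (pNum d : ℝ) * wq q A - f A * (pNum d : ℝ) * q ^ d
          = f A * (pNum d : ℝ) * (wq q A - q ^ d) := by ring
      rw [heq, abs_mul, abs_mul,
        abs_of_nonneg (show (0:ℝ) ≤ ((pNum d : ℕ) : ℝ) from Nat.cast_nonneg _)]
      have hb := indiscrete_bound hq0 hq2 hd
      rw [← hA] at hb
      calc |f A| * ((pNum d : ℕ) : ℝ) * |wq q A - q ^ d|
          ≤ |f A| * ((pNum d : ℕ) : ℝ) * (2 * q ^ (d + 2)) :=
            mul_le_mul_of_nonneg_left hb (by positivity)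
        _ = |f A| * ((pNum d : ℕ) : ℝ) * 2 * q ^ (d + 2) := by ring
    · by_cases hPB : P = B
      · subst hPB
        have hcB : c B = |f B| * (pOf B : ℝ) * 10 := by simp [hc, hPA]
        rw [hcB, if_neg hPA, if_pos rfl]
        have hpof : (pOf B : ℝ) = (pNum (d - 1) : ℝ) := by
          rw [hB, pOf_hook hd]
        rw [sub_zero, hpof]
        have heq : f B * (pNum (d - 1) : ℝ) * wq q B - f B * (pNum (d - 1) : ℝ) * q ^ (d + 1)
            = f B * (pNum (d - 1) : ℝ) * (wq q B - q ^ (d + 1)) := by ring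
        rw [heq, abs_mul, abs_mul,
          abs_of_nonneg (show (0:ℝ) ≤ ((pNum (d - 1) : ℕ) : ℝ) from Nat.cast_nonneg _)]
        have hb := hook_bound hq0 hq2 hd
        rw [← hB] at hb
        calc |f B| * ((pNum (d - 1) : ℕ) : ℝ) * |wq q B - q ^ (d + 1)|
            ≤ |f B| * ((pNum (d - 1) : ℕ) : ℝ) * (10 * q ^ (d + 2)) :=
              mul_le_mul_of_nonneg_left hb (by positivity)
          _ = |f B| * ((pNum (d - 1) : ℕ) : ℝ) * 10 * q ^ (d + 2) := by ring
      · have hcP : c P = |f P| * (pOf P : ℝ) *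
            ((P.parts.toList.length.factorial * 2 ^ P.parts.toList.length : ℕ) : ℝ) := by
          simp [hc, hPA, hPB]
        rw [hcP, if_neg hPA, if_neg hPB]
        rw [sub_zero, sub_zero, abs_mul, abs_mul]
        have hwnn := wq_nonneg hq0 hq2 P
        have hwb := wq_generic_le hq0 hq2 hq1 hd P (by rw [← hA]; exact hPA)
          (by rw [← hB]; exact hPB)
        rw [abs_of_nonneg hwnn,
          abs_of_nonneg (show (0:ℝ) ≤ ((pOf P : ℕ) : ℝ) from Nat.cast_nonneg _)]
        calc |f P| * (pOf P : ℝ) * wq q P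
            ≤ |f P| * (pOf P : ℝ) *
              (((P.parts.toList.length.factorial * 2 ^ P.parts.toList.length : ℕ) : ℝ) *
                q ^ (d + 2)) :=
            mul_le_mul_of_nonneg_left hwb (by positivity)
          _ = |f P| * (pOf P : ℝ) *
              ((P.parts.toList.length.factorial * 2 ^ P.parts.toList.length : ℕ) : ℝ) *
                q ^ (d + 2) := by
            ring
  refine le_trans (Finset.sum_le_sum fun P _ => hbound P) ?_
  rw [← Finset.sum_mul]
  have hqn : (0:ℝ) ≤ q ^ (d + 2) := by positivity
  nlinarith [Finset.sum_nonneg (fun P (_ : P ∈ (Finset.univ : Finset (Nat.Partition d))) => hcnn P)]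
end

section
/- Let d ≥ 1. For each partition λ of d, the probability assigned to λ by the quantum measure on partitions of d converges as q → 0⁺ to the Dirac measure at the one-part partition (d); that is, lim_{q → 0⁺} p(λ) · w_q(λ) / ( Σ_{μ ⊢ d} p(μ) · w_q(μ) ) equals 1 if λ = (d) and equals 0 otherwise. -/
open scoped Classical

namespace ZeroTempAux

variable {d : ℕ}

/-- The partial sum `S_j(σ)`. -/
noncomputable def Spart (P : Nat.Partition d) (σ : Equiv.Perm (Fin P.parts.toList.length))
    (j : Fin P.parts.toList.length) : ℕ :=
  ∑ i ∈ Finset.univ.filter (fun i => i ≤ j), P.parts.toList.get (σ i)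

/-- The total exponent `E(σ) = Σ_j S_j(σ)`. -/
noncomputable def Epart (P : Nat.Partition d) (σ : Equiv.Perm (Fin P.parts.toList.length)) : ℕ :=
  ∑ j, Spart P σ j

lemma get_pos (P : Nat.Partition d) (i : Fin P.parts.toList.length) :
    1 ≤ P.parts.toList.get i := by
  have : P.parts.toList.get i ∈ P.parts := by
    rw [← Multiset.mem_toList]; exact List.get_mem _ _
  exact P.parts_pos this

lemma sum_get (P : Nat.Partition d) :
    ∑ i, P.parts.toList.get i = d := by
  simp [List.get_eq_getElem, Multiset.sum_toList, P.parts_sum]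

lemma one_le_Spart (P : Nat.Partition d) (σ : Equiv.Perm (Fin P.parts.toList.length))
    (j : Fin P.parts.toList.length) : 1 ≤ Spart P σ j := by
  have hj : j ∈ Finset.univ.filter (fun i => i ≤ j) := by simp
  calc 1 ≤ P.parts.toList.get (σ j) := get_pos P _
    _ ≤ Spart P σ j := by
      unfold Spart
      exact Finset.single_le_sum (f := fun i => P.parts.toList.get (σ i))
        (fun i _ => Nat.zero_le _) hj

lemma length_pos (P : Nat.Partition d) (hd : 1 ≤ d) : 0 < P.parts.toList.length := by
  rw [Multiset.length_toList, Multiset.card_pos]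
  intro h
  have := P.parts_sum
  rw [h] at this
  simp at this
  omega

lemma Spart_top (P : Nat.Partition d) (h0 : 0 < P.parts.toList.length)
    (σ : Equiv.Perm (Fin P.parts.toList.length)) :
    Spart P σ ⟨P.parts.toList.length - 1, by omega⟩ = d := by
  unfold Spart
  rw [Finset.filter_true_of_mem]
  · rw [Equiv.sum_comp σ (fun i => P.parts.toList.get i)]
    exact sum_get P
  · intro i _
    rw [Fin.le_def]
    have := i.isLt
    simp only []
    omega

lemma d_le_Epart (P : Nat.Partition d) (h0 : 0 < P.parts.toList.length)
    (σ : Equiv.Perm (Fin P.parts.toList.length)) : d ≤ Epart P σ := by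
  have h := Finset.single_le_sum (f := Spart P σ) (fun i _ => Nat.zero_le _)
    (Finset.mem_univ (⟨P.parts.toList.length - 1, by omega⟩ : Fin P.parts.toList.length))
  rw [Spart_top P h0 σ] at h
  exact h

lemma succ_le_Epart (P : Nat.Partition d) (h2 : 2 ≤ P.parts.toList.length)
    (σ : Equiv.Perm (Fin P.parts.toList.length)) : d + 1 ≤ Epart P σ := by
  have h0 : 0 < P.parts.toList.length := by omega
  set j₀ : Fin P.parts.toList.length := ⟨P.parts.toList.length - 1, by omega⟩ with hj₀
  set j₁ : Fin P.parts.toList.length := ⟨0, by omega⟩ with hj₁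
  have hne : j₀ ≠ j₁ := by
    simp only [hj₀, hj₁, ne_eq, Fin.mk.injEq]
    omega
  have hsub := Finset.sum_le_sum_of_subset
    (Finset.subset_univ ({j₀, j₁} : Finset (Fin P.parts.toList.length))) (f := Spart P σ)
  rw [Finset.sum_pair hne] at hsub
  have h₀ : Spart P σ j₀ = d := Spart_top P h0 σ
  have h₁ : 1 ≤ Spart P σ j₁ := one_le_Spart P σ j₁
  have hE : Epart P σ = ∑ j, Spart P σ j := rfl
  omega

/-- The reduced weight `g_P(q)` with `w_q(P) = q^d g_P(q)`. -/
noncomputable def gfun (P : Nat.Partition d) (q : ℝ) : ℝ :=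
  (1 / (autCard P : ℝ)) *
    ∑ σ : Equiv.Perm (Fin P.parts.toList.length),
      q ^ (Epart P σ - d) * ∏ j, (1 - q ^ Spart P σ j)⁻¹

lemma wq_eq (P : Nat.Partition d) (hd : 1 ≤ d) (q : ℝ) :
    wq q P = q ^ d * gfun P q := by
  have h0 := length_pos P hd
  have hw : wq q P = (1 / (autCard P : ℝ)) *
      ∑ σ : Equiv.Perm (Fin P.parts.toList.length),
        ∏ j, (q ^ Spart P σ j / (1 - q ^ Spart P σ j)) := rfl
  have key : ∀ σ : Equiv.Perm (Fin P.parts.toList.length),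
      (∏ j, (q ^ Spart P σ j / (1 - q ^ Spart P σ j))) =
        q ^ d * (q ^ (Epart P σ - d) * ∏ j, (1 - q ^ Spart P σ j)⁻¹) := by
    intro σ
    have h1 : (∏ j, (q ^ Spart P σ j / (1 - q ^ Spart P σ j))) =
        (∏ j, q ^ Spart P σ j) * ∏ j, (1 - q ^ Spart P σ j)⁻¹ := by
      rw [← Finset.prod_mul_distrib]
      simp [div_eq_mul_inv]
    rw [h1, Finset.prod_pow_eq_pow_sum]
    have h2 : (∑ j, Spart P σ j) = d + (Epart P σ - d) := by
      have := d_le_Epart P h0 σ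
      have hE : Epart P σ = ∑ j, Spart P σ j := rfl
      omega
    rw [h2, pow_add, mul_assoc]
  rw [hw, gfun]
  rw [Finset.sum_congr rfl (fun σ _ => key σ), ← Finset.mul_sum]
  ring

lemma gfun_tendsto (P : Nat.Partition d) :
    Filter.Tendsto (gfun P) (nhds 0) (nhds (gfun P 0)) := by
  unfold gfun
  apply Filter.Tendsto.const_mul
  apply tendsto_finset_sum
  intro σ _
  apply Filter.Tendsto.mul
  · exact (continuous_pow _).tendsto 0
  · apply tendsto_finset_prod
    intro j _
    refine Filter.Tendsto.inv₀ (tendsto_const_nhds.sub ((continuous_pow _).tendsto 0)) ?_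
    rw [zero_pow (by have := one_le_Spart P σ j; omega)]
    norm_num

lemma gfun_zero_of_len_one (P : Nat.Partition d) (h : P.parts.toList.length = 1) :
    gfun P 0 = 1 := by
  have haut : autCard P = 1 := by
    obtain ⟨a, ha⟩ := Multiset.card_eq_one.mp (by rw [← Multiset.length_toList]; exact h)
    simp [autCard, ha]
  have h0 : 0 < P.parts.toList.length := by omega
  have key : ∀ σ : Equiv.Perm (Fin P.parts.toList.length),
      (0:ℝ) ^ (Epart P σ - d) * ∏ j, ((1:ℝ) - 0 ^ Spart P σ j)⁻¹ = 1 := by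
    intro σ
    have hS : ∀ j : Fin P.parts.toList.length, Spart P σ j = d := by
      intro j
      have : j = ⟨P.parts.toList.length - 1, by omega⟩ := by
        apply Fin.ext
        have := j.isLt
        omega
      rw [this]
      exact Spart_top P h0 σ
    have hE : Epart P σ = d := by
      have : Epart P σ = ∑ j, Spart P σ j := rfl
      rw [this, Finset.sum_congr rfl (fun j _ => hS j), Finset.sum_const, Finset.card_univ,
        Fintype.card_fin, h, one_smul]
    have hprod : (∏ j, ((1:ℝ) - 0 ^ Spart P σ j)⁻¹) = 1 := by
      apply Finset.prod_eq_one
      intro j _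
      rw [zero_pow (by have := one_le_Spart P σ j; omega)]
      norm_num
    rw [hE, Nat.sub_self, pow_zero, one_mul, hprod]
  unfold gfun
  rw [Finset.sum_congr rfl (fun σ _ => key σ), Finset.sum_const, Finset.card_univ, haut]
  have hc : Multiset.card P.parts = 1 := by rw [← Multiset.length_toList]; exact h
  simp [Fintype.card_perm, hc]

lemma gfun_zero_of_two_le (P : Nat.Partition d) (h2 : 2 ≤ P.parts.toList.length) :
    gfun P 0 = 0 := by
  unfold gfun
  have key : ∀ σ : Equiv.Perm (Fin P.parts.toList.length),
      (0:ℝ) ^ (Epart P σ - d) * ∏ j, ((1:ℝ) - 0 ^ Spart P σ j)⁻¹ = 0 := by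
    intro σ
    rw [zero_pow (by have := succ_le_Epart P h2 σ; omega), zero_mul]
  rw [Finset.sum_congr rfl (fun σ _ => key σ), Finset.sum_const]
  simp

lemma eq_indiscrete_of_len_one (P : Nat.Partition d) (hd : 1 ≤ d)
    (h : P.parts.toList.length = 1) : P = Nat.Partition.indiscrete d := by
  obtain ⟨a, ha⟩ := Multiset.card_eq_one.mp (by rw [← Multiset.length_toList]; exact h)
  have had : a = d := by
    have := P.parts_sum
    rw [ha] at this
    simpa using this
  apply Nat.Partition.ext
  rw [ha, had, Nat.Partition.indiscrete_parts (by omega)]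

lemma len_indiscrete (hd : 1 ≤ d) :
    (Nat.Partition.indiscrete d).parts.toList.length = 1 := by
  rw [Multiset.length_toList, Nat.Partition.indiscrete_parts (by omega)]
  simp

end ZeroTempAux

/-- For `d ≥ 1` and a partition `λ` of `d`, the probability
`p(λ)·w_q(λ) / Σ_{μ⊢d} p(μ)·w_q(μ)` converges as `q → 0⁺` to `1` if `λ = (d)` and `0`
otherwise, i.e. the quantum measure converges weakly to the Dirac measure at `(d)`. -/
theorem zero_temp_stmt8 (d : ℕ) (hd : 1 ≤ d) (P : Nat.Partition d) :
    Filter.Tendsto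
      (fun q : ℝ =>
        (pOf P : ℝ) * wq q P / ∑ Q : Nat.Partition d, (pOf Q : ℝ) * wq q Q)
      (nhdsWithin 0 (Set.Ioi 0))
      (nhds (if P = Nat.Partition.indiscrete d then 1 else 0)) := by
  classical
  open ZeroTempAux in
  have hgD : gfun (Nat.Partition.indiscrete d) 0 = 1 :=
    gfun_zero_of_len_one _ (len_indiscrete hd)
  have hpOfD : pOf (Nat.Partition.indiscrete d) = pNum d := by
    simp [pOf, Nat.Partition.indiscrete_parts (by omega : d ≠ 0)]
  have hsum0 : (∑ Q : Nat.Partition d, (pOf Q : ℝ) * ZeroTempAux.gfun Q 0) = (pNum d : ℝ) := by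
    rw [Finset.sum_eq_single (Nat.Partition.indiscrete d)]
    · rw [hgD, mul_one, hpOfD]
    · intro Q _ hQ
      have h2 : 2 ≤ Q.parts.toList.length := by
        have h1 := ZeroTempAux.length_pos Q hd
        by_contra hc
        exact hQ (ZeroTempAux.eq_indiscrete_of_len_one Q hd (by omega))
      rw [ZeroTempAux.gfun_zero_of_two_le Q h2, mul_zero]
    · intro h
      exact absurd (Finset.mem_univ _) h
  have hpd : (0:ℝ) < (pNum d : ℝ) := by
    have : 0 < pNum d := Fintype.card_pos
    exact_mod_cast this
  -- the reduced function
  have htend : Filter.Tendsto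
      (fun q : ℝ => (pOf P : ℝ) * ZeroTempAux.gfun P q /
        ∑ Q : Nat.Partition d, (pOf Q : ℝ) * ZeroTempAux.gfun Q q)
      (nhdsWithin 0 (Set.Ioi 0))
      (nhds (if P = Nat.Partition.indiscrete d then 1 else 0)) := by
    have hnum : Filter.Tendsto (fun q : ℝ => (pOf P : ℝ) * ZeroTempAux.gfun P q)
        (nhdsWithin 0 (Set.Ioi 0)) (nhds ((pOf P : ℝ) * ZeroTempAux.gfun P 0)) :=
      (tendsto_const_nhds.mul (ZeroTempAux.gfun_tendsto P)).mono_left nhdsWithin_le_nhds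
    have hden : Filter.Tendsto
        (fun q : ℝ => ∑ Q : Nat.Partition d, (pOf Q : ℝ) * ZeroTempAux.gfun Q q)
        (nhdsWithin 0 (Set.Ioi 0)) (nhds ((pNum d : ℝ))) := by
      rw [← hsum0]
      exact (tendsto_finset_sum _ (fun Q _ =>
        tendsto_const_nhds.mul (ZeroTempAux.gfun_tendsto Q))).mono_left nhdsWithin_le_nhds
    have := hnum.div hden (ne_of_gt hpd)
    convert this using 2
    · rfl
    by_cases hP : P = Nat.Partition.indiscrete d
    · rw [if_pos hP, hP, hgD, mul_one, hpOfD, div_self (ne_of_gt hpd)]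
    · have h2 : 2 ≤ P.parts.toList.length := by
        have h1 := ZeroTempAux.length_pos P hd
        by_contra hc
        exact hP (ZeroTempAux.eq_indiscrete_of_len_one P hd (by omega))
      rw [if_neg hP, ZeroTempAux.gfun_zero_of_two_le P h2, mul_zero, zero_div]
  apply htend.congr'
  apply Filter.eventuallyEq_of_mem self_mem_nhdsWithin
  intro q hq
  have hq0 : (0:ℝ) < q := hq
  have hnum : (pOf P : ℝ) * wq q P = q ^ d * ((pOf P : ℝ) * ZeroTempAux.gfun P q) := by
    rw [ZeroTempAux.wq_eq P hd]; ring
  have hden : (∑ Q : Nat.Partition d, (pOf Q : ℝ) * wq q Q) =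
      q ^ d * ∑ Q : Nat.Partition d, (pOf Q : ℝ) * ZeroTempAux.gfun Q q := by
    rw [Finset.mul_sum]
    exact Finset.sum_congr rfl fun Q _ => by rw [ZeroTempAux.wq_eq Q hd]; ring
  show (pOf P : ℝ) * ZeroTempAux.gfun P q /
      (∑ Q : Nat.Partition d, (pOf Q : ℝ) * ZeroTempAux.gfun Q q) =
    (pOf P : ℝ) * wq q P / ∑ Q : Nat.Partition d, (pOf Q : ℝ) * wq q Q
  rw [hnum, hden, mul_div_mul_left _ _ (pow_ne_zero d (ne_of_gt hq0))]
end

section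
/- Let d ≥ 2 and n ≥ 2d, and let g be a real-valued function on 𝔐^{(n)}_d that is invariant under permuting the entries of a tuple. Then there exist a constant C > 0 and δ ∈ (0,1) such that for all q ∈ (0, δ): | Σ_{k=1}^{d} Σ_{(μ^{(1)},…,μ^{(k)}) ∈ 𝔐^{(n)}_{d,k}} g(μ^{(1)},…,μ^{(k)}) · W_q(μ^{(1)},…,μ^{(k)}) − q^d Σ_{μ^{(1)}: ℓ*(μ^{(1)}) = d} g(μ^{(1)}) − q^{d+1} Σ_{(μ^{(1)},μ^{(2)}): ℓ*(μ^{(1)}) = d−1, ℓ*(μ^{(2)}) = 1} g(μ^{(1)},μ^{(2)}) | ≤ C · q^{d+2}, where the latter two sums run over single partitions and ordered pairs of partitions of n with the indicated colengths. -/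
open scoped Classical

/-- The colength `ℓ*(μ) = |μ| - ℓ(μ)` of a partition `μ` of `n`. -/
def colen {n : ℕ} (P : Nat.Partition n) : ℕ := n - Multiset.card P.parts

/-- `𝔐^{(n)}_{d,k}`: the set of `k`-tuples `(μ⁽¹⁾, …, μ⁽ᵏ⁾)` of partitions of `n` with
`ℓ*(μ⁽ʲ⁾) ≥ 1` for all `j` and `Σⱼ ℓ*(μ⁽ʲ⁾) = d`. -/
noncomputable def Mset (n d k : ℕ) : Finset (Fin k → Nat.Partition n) :=
  Finset.univ.filter (fun T => (∀ j, 1 ≤ colen (T j)) ∧ ∑ j, colen (T j) = d)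

/-- The weight `W_q(μ⁽¹⁾, …, μ⁽ᵏ⁾) = ∏ⱼ q^{Tⱼ}/(1 - q^{Tⱼ})`, with
`Tⱼ = ℓ*(μ⁽¹⁾) + … + ℓ*(μ⁽ʲ⁾)`. -/
noncomputable def Wq (q : ℝ) {n k : ℕ} (T : Fin k → Nat.Partition n) : ℝ :=
  ∏ j : Fin k,
    (q ^ (∑ i ∈ Finset.univ.filter (fun i => i ≤ j), colen (T i)) /
      (1 - q ^ (∑ i ∈ Finset.univ.filter (fun i => i ≤ j), colen (T i))))

lemma mem_Mset_iff {n d k : ℕ} {T : Fin k → Nat.Partition n} :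
    T ∈ Mset n d k ↔ (∀ j, 1 ≤ colen (T j)) ∧ ∑ j, colen (T j) = d := by
  simp [Mset]

lemma bsum_ge_one {n d k : ℕ} {T : Fin k → Nat.Partition n} (hT : T ∈ Mset n d k) (j : Fin k) :
    1 ≤ ∑ i ∈ Finset.univ.filter (fun i => i ≤ j), colen (T i) := by
  rw [mem_Mset_iff] at hT
  calc 1 ≤ colen (T j) := hT.1 j
    _ ≤ _ := Finset.single_le_sum (f := fun i => colen (T i))
        (fun i _ => Nat.zero_le _) (by simp)

lemma bsum_last {n d k : ℕ} {T : Fin k → Nat.Partition n} (hT : T ∈ Mset n d k)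
    (j : Fin k) (hj : ∀ i : Fin k, i ≤ j) :
    ∑ i ∈ Finset.univ.filter (fun i => i ≤ j), colen (T i) = d := by
  rw [mem_Mset_iff] at hT
  rw [Finset.filter_true_of_mem (fun i _ => hj i)]
  exact hT.2

lemma factor_nonneg {q : ℝ} (hq0 : 0 < q) (hq : q ≤ 1/2) {m : ℕ} (hm : 1 ≤ m) :
    0 ≤ q ^ m / (1 - q ^ m) := by
  have h1 : q ^ m ≤ q := pow_le_of_le_one hq0.le (by linarith) (by omega)
  have h2 : (0:ℝ) < 1 - q ^ m := by linarith
  positivity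

lemma factor_le {q : ℝ} (hq0 : 0 < q) (hq : q ≤ 1/2) {m : ℕ} (hm : 1 ≤ m) :
    q ^ m / (1 - q ^ m) ≤ 2 * q ^ m := by
  have h1 : q ^ m ≤ q := pow_le_of_le_one hq0.le (by linarith) (by omega)
  have h2 : (0:ℝ) < 1 - q ^ m := by linarith
  rw [div_le_iff₀ h2]
  nlinarith [pow_nonneg hq0.le m]

lemma Wq_nonneg {n d k : ℕ} {q : ℝ} (hq0 : 0 < q) (hq : q ≤ 1/2)
    {T : Fin k → Nat.Partition n} (hT : T ∈ Mset n d k) : 0 ≤ Wq q T :=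
  Finset.prod_nonneg fun j _ => factor_nonneg hq0 hq (bsum_ge_one hT j)

lemma Wq_le_pow {n d k : ℕ} {q : ℝ} (hq0 : 0 < q) (hq : q ≤ 1/2)
    {T : Fin k → Nat.Partition n} (hT : T ∈ Mset n d k) :
    Wq q T ≤ 2 ^ k * q ^ (∑ j : Fin k,
      ∑ i ∈ Finset.univ.filter (fun i => i ≤ j), colen (T i)) := by
  rw [Wq]
  calc ∏ j : Fin k, (q ^ (∑ i ∈ Finset.univ.filter (fun i => i ≤ j), colen (T i)) /
        (1 - q ^ (∑ i ∈ Finset.univ.filter (fun i => i ≤ j), colen (T i))))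
      ≤ ∏ j : Fin k, 2 * q ^ (∑ i ∈ Finset.univ.filter (fun i => i ≤ j), colen (T i)) :=
        Finset.prod_le_prod (fun j _ => factor_nonneg hq0 hq (bsum_ge_one hT j))
          (fun j _ => factor_le hq0 hq (bsum_ge_one hT j))
    _ = 2 ^ k * q ^ (∑ j : Fin k,
        ∑ i ∈ Finset.univ.filter (fun i => i ≤ j), colen (T i)) := by
        rw [Finset.prod_mul_distrib, Finset.prod_const, Finset.prod_pow_eq_pow_sum]
        simp

lemma sum_bsum_ge {n d k : ℕ} (hk : 3 ≤ k) {T : Fin k → Nat.Partition n}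
    (hT : T ∈ Mset n d k) :
    d + 2 ≤ ∑ j : Fin k, ∑ i ∈ Finset.univ.filter (fun i => i ≤ j), colen (T i) := by
  have hk0 : 0 < k := by omega
  set last : Fin k := ⟨k - 1, by omega⟩ with hlastdef
  have hlast : ∑ i ∈ Finset.univ.filter (fun i => i ≤ last), colen (T i) = d :=
    bsum_last hT last (fun i => by
      simp only [hlastdef, Fin.le_def]
      omega)
  rw [← Finset.sum_erase_add _ _ (Finset.mem_univ last), hlast]
  have hcard : (Finset.univ.erase last).card = k - 1 := by
    rw [Finset.card_erase_of_mem (Finset.mem_univ last), Finset.card_univ, Fintype.card_fin]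
  have h2 : (Finset.univ.erase last).card * 1 ≤
      ∑ j ∈ Finset.univ.erase last, ∑ i ∈ Finset.univ.filter (fun i => i ≤ j), colen (T i) := by
    have := Finset.card_nsmul_le_sum (Finset.univ.erase last)
      (fun j => ∑ i ∈ Finset.univ.filter (fun i => i ≤ j), colen (T i)) 1
      (fun j _ => bsum_ge_one hT j)
    simpa using this
  omega

lemma Wq_one {n d : ℕ} {q : ℝ} {T : Fin 1 → Nat.Partition n} (hT : T ∈ Mset n d 1) :
    Wq q T = q ^ d / (1 - q ^ d) := by
  rw [Wq, Fin.prod_univ_one,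
    bsum_last hT 0 (fun i => le_of_eq (Subsingleton.elim i 0))]

lemma filter_le_zero_two : Finset.univ.filter (fun i : Fin 2 => i ≤ 0) = {0} := by
  ext i
  simp [Fin.le_zero_iff]

lemma Wq_two {n d : ℕ} {q : ℝ} {T : Fin 2 → Nat.Partition n} (hT : T ∈ Mset n d 2) :
    Wq q T = (q ^ colen (T 0) / (1 - q ^ colen (T 0))) * (q ^ d / (1 - q ^ d)) := by
  rw [Wq, Fin.prod_univ_two, filter_le_zero_two, Finset.sum_singleton,
    bsum_last hT 1 (fun i => Fin.le_last i)]

lemma sum_bsum_two {n d : ℕ} {T : Fin 2 → Nat.Partition n} (hT : T ∈ Mset n d 2) :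
    ∑ j : Fin 2, ∑ i ∈ Finset.univ.filter (fun i => i ≤ j), colen (T i)
      = colen (T 0) + d := by
  rw [Fin.sum_univ_two, filter_le_zero_two, Finset.sum_singleton,
    bsum_last hT 1 (fun i => Fin.le_last i)]

lemma bound1 {d : ℕ} (hd : 2 ≤ d) {q : ℝ} (hq0 : 0 < q) (hq : q ≤ 1/2) :
    |q ^ d / (1 - q ^ d) - q ^ d| ≤ 8 * q ^ (d + 2) := by
  have hq1 : q ≤ 1 := by linarith
  have h1 : q ^ d ≤ q := pow_le_of_le_one hq0.le hq1 (by omega)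
  have h2 : (0:ℝ) < 1 - q ^ d := by linarith
  have h3 : q ^ d / (1 - q ^ d) - q ^ d = q ^ d * q ^ d / (1 - q ^ d) := by
    field_simp; ring
  rw [h3, abs_of_nonneg (by positivity), div_le_iff₀ h2]
  have h4 : q ^ d ≤ q ^ 2 := pow_le_pow_of_le_one hq0.le hq1 hd
  have h5 : q ^ d * q ^ d ≤ q ^ d * q ^ 2 :=
    mul_le_mul_of_nonneg_left h4 (by positivity)
  have h6 : q ^ d * q ^ 2 = q ^ (d + 2) := (pow_add q d 2).symm
  nlinarith [pow_nonneg hq0.le (d + 2), pow_nonneg hq0.le d]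

lemma bound2 {d : ℕ} (hd : 2 ≤ d) {q : ℝ} (hq0 : 0 < q) (hq : q ≤ 1/2) :
    |q ^ 1 / (1 - q ^ 1) * (q ^ d / (1 - q ^ d)) - q ^ (d + 1)| ≤ 8 * q ^ (d + 2) := by
  have hq1 : q ≤ 1 := by linarith
  have h1 : q ^ d ≤ q := pow_le_of_le_one hq0.le hq1 (by omega)
  have ha : (0:ℝ) < 1 - q := by linarith
  have hb : (0:ℝ) < 1 - q ^ d := by linarith
  have hd0 : (0:ℝ) < q ^ d := by positivity
  have key : q ^ 1 / (1 - q ^ 1) * (q ^ d / (1 - q ^ d)) - q ^ (d + 1)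
      = q ^ (d + 1) * ((1 - (1 - q) * (1 - q ^ d)) / ((1 - q) * (1 - q ^ d))) := by
    simp only [pow_succ, pow_one]
    field_simp
  rw [key]
  have hnum : 0 ≤ 1 - (1 - q) * (1 - q ^ d) := by nlinarith
  have hnum2 : 1 - (1 - q) * (1 - q ^ d) ≤ 2 * q := by nlinarith
  have hden : (1:ℝ)/4 ≤ (1 - q) * (1 - q ^ d) := by nlinarith
  have hden0 : (0:ℝ) < (1 - q) * (1 - q ^ d) := by positivity
  have hfrac : (1 - (1 - q) * (1 - q ^ d)) / ((1 - q) * (1 - q ^ d)) ≤ 8 * q := by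
    rw [div_le_iff₀ hden0]
    nlinarith
  have hfrac0 : 0 ≤ (1 - (1 - q) * (1 - q ^ d)) / ((1 - q) * (1 - q ^ d)) := by positivity
  rw [abs_of_nonneg (by positivity)]
  calc q ^ (d + 1) * ((1 - (1 - q) * (1 - q ^ d)) / ((1 - q) * (1 - q ^ d)))
      ≤ q ^ (d + 1) * (8 * q) := by
        apply mul_le_mul_of_nonneg_left hfrac (by positivity)
    _ = 8 * q ^ (d + 2) := by rw [pow_succ]; ring

/-- For `d ≥ 2`, `n ≥ 2d` and any real-valued function `g` on `𝔐^{(n)}_d`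
(given as a family `g k` on `k`-tuples) invariant under permuting the entries of a tuple,
there exist `C > 0` and `δ ∈ (0,1)` such that for all `q ∈ (0,δ)`:
`|Σ_{k=1}^d Σ_{T ∈ 𝔐^{(n)}_{d,k}} g(T)·W_q(T) - q^d Σ_{ℓ*(μ⁽¹⁾)=d} g(μ⁽¹⁾)
 - q^{d+1} Σ_{ℓ*(μ⁽¹⁾)=d-1, ℓ*(μ⁽²⁾)=1} g(μ⁽¹⁾,μ⁽²⁾)| ≤ C·q^{d+2}`. -/
theorem zero_temp_stmt11 (d n : ℕ) (hd : 2 ≤ d) (hn : 2 * d ≤ n)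
    (g : ∀ k : ℕ, (Fin k → Nat.Partition n) → ℝ)
    (hg : ∀ (k : ℕ) (σ : Equiv.Perm (Fin k)) (T : Fin k → Nat.Partition n),
      g k (T ∘ σ) = g k T) :
    ∃ C : ℝ, 0 < C ∧ ∃ δ ∈ Set.Ioo (0 : ℝ) 1, ∀ q ∈ Set.Ioo (0 : ℝ) δ,
      |(∑ k ∈ Finset.Icc 1 d, ∑ T ∈ Mset n d k, g k T * Wq q T)
        - q ^ d * ∑ P ∈ Finset.univ.filter (fun P : Nat.Partition n => colen P = d),
            g 1 ![P]
        - q ^ (d + 1) * ∑ P ∈ Finset.univ.filter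
            (fun P : Nat.Partition n × Nat.Partition n =>
              colen P.1 = d - 1 ∧ colen P.2 = 1),
            g 2 ![P.1, P.2]| ≤ C * q ^ (d + 2) := by
  set G : ℝ := ∑ k ∈ Finset.Icc 1 d, ∑ T ∈ Mset n d k, |g k T| with hG
  have hG0 : 0 ≤ G := Finset.sum_nonneg fun k _ =>
    Finset.sum_nonneg fun T _ => abs_nonneg _
  refine ⟨(2 ^ d + 8) * G + 1, by positivity, 1/2, ⟨by norm_num, by norm_num⟩, ?_⟩
  rintro q ⟨hq0, hq2⟩
  have hq : q ≤ 1/2 := le_of_lt hq2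
  have hq1 : q < 1 := by linarith
  -- step 1
  have step1 : q ^ d * (∑ P ∈ Finset.univ.filter
        (fun P : Nat.Partition n => colen P = d), g 1 ![P])
      = ∑ T ∈ Mset n d 1, g 1 T * q ^ d := by
    rw [Finset.mul_sum]
    refine Finset.sum_nbij' (i := fun P => ![P]) (j := fun T => T 0) ?_ ?_ ?_ ?_ ?_
    · intro P hP
      simp only [Finset.mem_filter, Finset.mem_univ, true_and] at hP
      rw [mem_Mset_iff]
      constructor
      · intro j
        have : j = 0 := Subsingleton.elim j 0
        rw [this]; simp [Matrix.cons_val_zero, hP]; omega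
      · rw [Fin.sum_univ_one]; simp [Matrix.cons_val_zero, hP]
    · intro T hT
      rw [mem_Mset_iff] at hT
      simp only [Finset.mem_filter, Finset.mem_univ, true_and]
      have := hT.2
      rwa [Fin.sum_univ_one] at this
    · intro P _; simp
    · intro T _
      funext i
      have : i = 0 := Subsingleton.elim i 0
      rw [this]; simp
    · intro P _; rw [mul_comm]
  -- step 2
  have step2 : q ^ (d + 1) * (∑ P ∈ Finset.univ.filter
        (fun P : Nat.Partition n × Nat.Partition n =>
          colen P.1 = d - 1 ∧ colen P.2 = 1), g 2 ![P.1, P.2])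
      = ∑ T ∈ (Mset n d 2).filter (fun T => colen (T 0) = 1), g 2 T * q ^ (d + 1) := by
    rw [Finset.mul_sum]
    refine Finset.sum_nbij' (i := fun P => ![P.2, P.1]) (j := fun T => (T 1, T 0))
      ?_ ?_ ?_ ?_ ?_
    · intro P hP
      simp only [Finset.mem_filter, Finset.mem_univ, true_and] at hP
      obtain ⟨h1, h2⟩ := hP
      simp only [Finset.mem_filter]
      refine ⟨?_, by simp [h2]⟩
      rw [mem_Mset_iff]
      constructor
      · intro j
        fin_cases j <;> simp [h1, h2] <;> omega
      · rw [Fin.sum_univ_two]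
        simp [h1, h2]; omega
    · intro T hT
      simp only [Finset.mem_filter] at hT
      obtain ⟨hT1, hT2⟩ := hT
      rw [mem_Mset_iff] at hT1
      simp only [Finset.mem_filter, Finset.mem_univ, true_and]
      have hs := hT1.2
      rw [Fin.sum_univ_two] at hs
      exact ⟨by omega, hT2⟩
    · intro P _; simp
    · intro T _
      funext i
      fin_cases i <;> simp
    · intro P hP
      have hswap : (![P.2, P.1] ∘ (Equiv.swap (0 : Fin 2) 1)) = ![P.1, P.2] := by
        funext i
        fin_cases i <;> simp [Equiv.swap_apply_left, Equiv.swap_apply_right]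
      have := hg 2 (Equiv.swap 0 1) ![P.2, P.1]
      rw [hswap] at this
      rw [this, mul_comm]
  rw [step1, step2]
  -- decompose the sum over k
  have hIcc : Finset.Icc 1 d = insert 1 (insert 2 (Finset.Icc 3 d)) := by
    ext x; simp only [Finset.mem_Icc, Finset.mem_insert]; omega
  have h1ni : (1 : ℕ) ∉ insert 2 (Finset.Icc 3 d) := by
    simp [Finset.mem_Icc]
  have h2ni : (2 : ℕ) ∉ Finset.Icc 3 d := by simp
  set X1 : ℝ := ∑ T ∈ Mset n d 1, g 1 T * (Wq q T - q ^ d) with hX1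
  set X2 : ℝ := ∑ T ∈ (Mset n d 2).filter (fun T => colen (T 0) = 1),
    g 2 T * (Wq q T - q ^ (d + 1)) with hX2
  set X3 : ℝ := ∑ T ∈ (Mset n d 2).filter (fun T => ¬ colen (T 0) = 1),
    g 2 T * Wq q T with hX3
  set X4 : ℝ := ∑ k ∈ Finset.Icc 3 d, ∑ T ∈ Mset n d k, g k T * Wq q T with hX4
  have hdecomp : (∑ k ∈ Finset.Icc 1 d, ∑ T ∈ Mset n d k, g k T * Wq q T)
      - (∑ T ∈ Mset n d 1, g 1 T * q ^ d)
      - (∑ T ∈ (Mset n d 2).filter (fun T => colen (T 0) = 1), g 2 T * q ^ (d + 1))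
      = X1 + X2 + X3 + X4 := by
    rw [hIcc, Finset.sum_insert h1ni, Finset.sum_insert h2ni,
      ← Finset.sum_filter_add_sum_filter_not (Mset n d 2)
        (fun T => colen (T 0) = 1) (fun T => g 2 T * Wq q T)]
    simp only [hX1, hX2, hX3, hX4, mul_sub, Finset.sum_sub_distrib]
    ring
  rw [hdecomp]
  -- bounds
  have hb1 : |X1| ≤ (∑ T ∈ Mset n d 1, |g 1 T|) * (8 * q ^ (d + 2)) := by
    rw [Finset.sum_mul]
    refine (Finset.abs_sum_le_sum_abs _ _).trans (Finset.sum_le_sum ?_)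
    intro T hT
    rw [abs_mul]
    apply mul_le_mul_of_nonneg_left _ (abs_nonneg _)
    rw [Wq_one hT]
    exact bound1 hd hq0 hq
  have hb2 : |X2| ≤ (∑ T ∈ (Mset n d 2).filter (fun T => colen (T 0) = 1), |g 2 T|)
      * (8 * q ^ (d + 2)) := by
    rw [Finset.sum_mul]
    refine (Finset.abs_sum_le_sum_abs _ _).trans (Finset.sum_le_sum ?_)
    intro T hT
    simp only [Finset.mem_filter] at hT
    rw [abs_mul]
    apply mul_le_mul_of_nonneg_left _ (abs_nonneg _)
    rw [Wq_two hT.1, hT.2]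
    exact bound2 hd hq0 hq
  have hWbound : ∀ k, 1 ≤ k → k ≤ d → ∀ T ∈ Mset n d k,
      (d + 2 ≤ ∑ j : Fin k, ∑ i ∈ Finset.univ.filter (fun i => i ≤ j), colen (T i)) →
      |Wq q T| ≤ 2 ^ d * q ^ (d + 2) := by
    intro k hk1 hkd T hT hsum
    rw [abs_of_nonneg (Wq_nonneg hq0 hq hT)]
    calc Wq q T ≤ 2 ^ k * q ^ (∑ j : Fin k,
          ∑ i ∈ Finset.univ.filter (fun i => i ≤ j), colen (T i)) := Wq_le_pow hq0 hq hT
      _ ≤ 2 ^ d * q ^ (d + 2) := by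
          apply mul_le_mul
          · exact pow_le_pow_right₀ (by norm_num) hkd
          · exact pow_le_pow_of_le_one hq0.le hq1.le hsum
          · positivity
          · positivity
  have hb3 : |X3| ≤ (∑ T ∈ (Mset n d 2).filter (fun T => ¬ colen (T 0) = 1), |g 2 T|)
      * (2 ^ d * q ^ (d + 2)) := by
    rw [Finset.sum_mul]
    refine (Finset.abs_sum_le_sum_abs _ _).trans (Finset.sum_le_sum ?_)
    intro T hT
    simp only [Finset.mem_filter] at hT
    rw [abs_mul]
    apply mul_le_mul_of_nonneg_left _ (abs_nonneg _)
    apply hWbound 2 (by omega) hd T hT.1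
    rw [sum_bsum_two hT.1]
    have := (mem_Mset_iff.mp hT.1).1 0
    have h2 := hT.2
    omega
  have hb4 : |X4| ≤ (∑ k ∈ Finset.Icc 3 d, ∑ T ∈ Mset n d k, |g k T|)
      * (2 ^ d * q ^ (d + 2)) := by
    rw [Finset.sum_mul]
    refine (Finset.abs_sum_le_sum_abs _ _).trans (Finset.sum_le_sum ?_)
    intro k hk
    simp only [Finset.mem_Icc] at hk
    rw [Finset.sum_mul]
    refine (Finset.abs_sum_le_sum_abs _ _).trans (Finset.sum_le_sum ?_)
    intro T hT
    rw [abs_mul]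
    apply mul_le_mul_of_nonneg_left _ (abs_nonneg _)
    exact hWbound k (by omega) hk.2 T hT (sum_bsum_ge hk.1 hT)
  -- sum of the |g|-sums equals G
  have hGsum : (∑ T ∈ Mset n d 1, |g 1 T|)
      + (∑ T ∈ (Mset n d 2).filter (fun T => colen (T 0) = 1), |g 2 T|)
      + (∑ T ∈ (Mset n d 2).filter (fun T => ¬ colen (T 0) = 1), |g 2 T|)
      + (∑ k ∈ Finset.Icc 3 d, ∑ T ∈ Mset n d k, |g k T|) = G := by
    rw [hG, hIcc, Finset.sum_insert h1ni, Finset.sum_insert h2ni,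
      ← Finset.sum_filter_add_sum_filter_not (Mset n d 2)
        (fun T => colen (T 0) = 1) (fun T => |g 2 T|)]
    ring
  have hqpow : 0 < q ^ (d + 2) := by positivity
  have h8 : (8 : ℝ) ≤ 2 ^ d + 8 := le_add_of_nonneg_left (by positivity)
  have h2d : (2 : ℝ) ^ d ≤ 2 ^ d + 8 := by linarith
  calc |X1 + X2 + X3 + X4| ≤ |X1| + |X2| + |X3| + |X4| := by
        calc |X1 + X2 + X3 + X4| ≤ |X1 + X2 + X3| + |X4| := abs_add_le _ _
          _ ≤ |X1 + X2| + |X3| + |X4| := by linarith [abs_add_le (X1 + X2) X3]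
          _ ≤ |X1| + |X2| + |X3| + |X4| := by linarith [abs_add_le X1 X2]
    _ ≤ (∑ T ∈ Mset n d 1, |g 1 T|) * ((2 ^ d + 8) * q ^ (d + 2))
        + (∑ T ∈ (Mset n d 2).filter (fun T => colen (T 0) = 1), |g 2 T|)
          * ((2 ^ d + 8) * q ^ (d + 2))
        + (∑ T ∈ (Mset n d 2).filter (fun T => ¬ colen (T 0) = 1), |g 2 T|)
          * ((2 ^ d + 8) * q ^ (d + 2))
        + (∑ k ∈ Finset.Icc 3 d, ∑ T ∈ Mset n d k, |g k T|)
          * ((2 ^ d + 8) * q ^ (d + 2)) := by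
        have s1 : (0:ℝ) ≤ ∑ T ∈ Mset n d 1, |g 1 T| :=
          Finset.sum_nonneg fun T _ => abs_nonneg _
        have s2 : (0:ℝ) ≤ ∑ T ∈ (Mset n d 2).filter (fun T => colen (T 0) = 1), |g 2 T| :=
          Finset.sum_nonneg fun T _ => abs_nonneg _
        have s3 : (0:ℝ) ≤ ∑ T ∈ (Mset n d 2).filter (fun T => ¬ colen (T 0) = 1), |g 2 T| :=
          Finset.sum_nonneg fun T _ => abs_nonneg _
        have s4 : (0:ℝ) ≤ ∑ k ∈ Finset.Icc 3 d, ∑ T ∈ Mset n d k, |g k T| :=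
          Finset.sum_nonneg fun k _ => Finset.sum_nonneg fun T _ => abs_nonneg _
        have e1 : (8:ℝ) * q ^ (d+2) ≤ (2 ^ d + 8) * q ^ (d + 2) :=
          mul_le_mul_of_nonneg_right h8 hqpow.le
        have e2 : (2:ℝ) ^ d * q ^ (d+2) ≤ (2 ^ d + 8) * q ^ (d + 2) :=
          mul_le_mul_of_nonneg_right h2d hqpow.le
        nlinarith [mul_le_mul_of_nonneg_left e1 s1, mul_le_mul_of_nonneg_left e1 s2,
          mul_le_mul_of_nonneg_left e2 s3, mul_le_mul_of_nonneg_left e2 s4]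
    _ = G * ((2 ^ d + 8) * q ^ (d + 2)) := by rw [← hGsum]; ring
    _ ≤ ((2 ^ d + 8) * G + 1) * q ^ (d + 2) := by nlinarith
end

section
/- Let d ≥ 1 and n ≥ 2d. For each tuple T = (μ^{(1)}, …, μ^{(k)}) ∈ 𝔐^{(n)}_{d,k}, the probability P_q(T) := W_q(T) / Z^{(n)}_d(q) converges as q → 0⁺ to the uniform measure on 𝔐^{(n)}_{d,1}; that is, lim_{q → 0⁺} P_q(T) = 1/|𝔐^{(n)}_{d,1}| if k = 1, and lim_{q → 0⁺} P_q(T) = 0 if k ≥ 2. Moreover |𝔐^{(n)}_{d,1}| = p(d). -/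
open scoped Classical

/-- The partition function `Z^{(n)}_d(q) = Σ_{k=1}^d Σ_{T ∈ 𝔐^{(n)}_{d,k}} W_q(T)`. -/
noncomputable def Zfn (n d : ℕ) (q : ℝ) : ℝ :=
  ∑ k ∈ Finset.Icc 1 d, ∑ T ∈ Mset n d k, Wq q T

/-! ### Auxiliary multiset lemmas -/

lemma aux_card_le_sum (s : Multiset ℕ) (h : ∀ x ∈ s, 1 ≤ x) :
    Multiset.card s ≤ s.sum := by
  have := Multiset.card_nsmul_le_sum h
  simpa using this

lemma aux_sum_map_sub (s : Multiset ℕ) (h : ∀ x ∈ s, 1 ≤ x) :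
    (s.map (· - 1)).sum = s.sum - Multiset.card s := by
  induction s using Multiset.induction with
  | empty => simp
  | cons a s ih =>
    simp only [Multiset.map_cons, Multiset.sum_cons, Multiset.card_cons]
    have ha : 1 ≤ a := h a (Multiset.mem_cons_self a s)
    have hs : ∀ x ∈ s, 1 ≤ x := fun x hx => h x (Multiset.mem_cons_of_mem hx)
    have hc := aux_card_le_sum s hs
    rw [ih hs]; omega

/-- `shrinkParts s` : subtract one from every part, dropping all 1's. -/
def shrinkParts (s : Multiset ℕ) : Multiset ℕ := (s.filter (2 ≤ ·)).map (· - 1)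

/-- `growParts t m` : add one to every part and append `m` parts equal to 1. -/
def growParts (t : Multiset ℕ) (m : ℕ) : Multiset ℕ :=
  t.map (· + 1) + Multiset.replicate m 1

lemma shrinkParts_sum (s : Multiset ℕ) (h : ∀ x ∈ s, 1 ≤ x) :
    (shrinkParts s).sum = s.sum - Multiset.card s := by
  classical
  rw [shrinkParts]
  have hsplit := Multiset.filter_add_not (2 ≤ ·) s
  have hone : (s.filter (fun x => ¬ 2 ≤ x)).map (· - 1) =
      Multiset.replicate (Multiset.card (s.filter (fun x => ¬ 2 ≤ x))) 0 := by
    rw [Multiset.eq_replicate]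
    constructor
    · simp
    · intro b hb
      obtain ⟨a, ha, rfl⟩ := Multiset.mem_map.mp hb
      have h1 := h a (Multiset.mem_of_mem_filter ha)
      have h2 := Multiset.of_mem_filter ha
      omega
  have : (s.map (· - 1)).sum = ((s.filter (2 ≤ ·)).map (· - 1)).sum := by
    conv_lhs => rw [← hsplit]
    rw [Multiset.map_add, Multiset.sum_add, hone]
    simp
  rw [← this, aux_sum_map_sub s h]

lemma shrinkParts_pos (s : Multiset ℕ) : ∀ x ∈ shrinkParts s, 0 < x := by
  intro x hx
  obtain ⟨a, ha, rfl⟩ := Multiset.mem_map.mp hx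
  have := Multiset.of_mem_filter ha
  omega

lemma shrinkParts_card (s : Multiset ℕ) :
    Multiset.card (shrinkParts s) = Multiset.card (s.filter (2 ≤ ·)) := by
  simp [shrinkParts]

lemma growParts_pos (t : Multiset ℕ) (m : ℕ) : ∀ x ∈ growParts t m, 0 < x := by
  intro x hx
  rcases Multiset.mem_add.mp hx with hx | hx
  · obtain ⟨a, _, rfl⟩ := Multiset.mem_map.mp hx; omega
  · rw [Multiset.eq_of_mem_replicate hx]; norm_num

lemma growParts_sum (t : Multiset ℕ) (m : ℕ) :
    (growParts t m).sum = t.sum + Multiset.card t + m := by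
  rw [growParts, Multiset.sum_add, Multiset.sum_replicate]
  have h1 : (t.map (· + 1)).sum = t.sum + Multiset.card t := by
    induction t using Multiset.induction with
    | empty => simp
    | cons a s ih =>
      simp only [Multiset.map_cons, Multiset.sum_cons, Multiset.card_cons, ih]
      ring
  rw [h1, smul_eq_mul, mul_one]

lemma growParts_card (t : Multiset ℕ) (m : ℕ) :
    Multiset.card (growParts t m) = Multiset.card t + m := by
  simp [growParts]

lemma shrink_grow (t : Multiset ℕ) (m : ℕ) (h : ∀ x ∈ t, 1 ≤ x) :
    shrinkParts (growParts t m) = t := by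
  classical
  rw [shrinkParts, growParts, Multiset.filter_add]
  have h1 : (t.map (· + 1)).filter (2 ≤ ·) = t.map (· + 1) := by
    rw [Multiset.filter_eq_self]
    intro a ha
    obtain ⟨b, hb, rfl⟩ := Multiset.mem_map.mp ha
    show 2 ≤ b + 1
    have := h b hb
    omega
  have h2 : (Multiset.replicate m 1).filter (2 ≤ ·) = 0 := by
    rw [Multiset.filter_eq_nil]
    intro a ha
    rw [Multiset.eq_of_mem_replicate ha]
    show ¬ 2 ≤ 1
    omega
  rw [h1, h2, add_zero, Multiset.map_map]
  have h3 : ((· - 1) ∘ (· + 1) : ℕ → ℕ) = id := by funext x; simp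
  rw [h3, Multiset.map_id]

lemma grow_shrink (s : Multiset ℕ) (h : ∀ x ∈ s, 1 ≤ x) :
    growParts (shrinkParts s)
      (Multiset.card s - Multiset.card (s.filter (2 ≤ ·))) = s := by
  classical
  rw [growParts, shrinkParts, Multiset.map_map]
  have hmap : (s.filter (2 ≤ ·)).map ((· + 1) ∘ (· - 1)) = s.filter (2 ≤ ·) := by
    rw [Multiset.map_congr rfl (fun x hx => by
      have := Multiset.of_mem_filter hx
      show x - 1 + 1 = id x
      simp only [id_eq]
      omega : ∀ x ∈ s.filter (2 ≤ ·), ((· + 1) ∘ (· - 1)) x = id x)]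
    exact Multiset.map_id _
  rw [hmap]
  have hcard : Multiset.card s - Multiset.card (s.filter (2 ≤ ·)) =
      Multiset.card (s.filter (fun x => ¬ 2 ≤ x)) := by
    have hsplit := Multiset.filter_add_not (2 ≤ ·) s
    have hc : Multiset.card (s.filter (2 ≤ ·)) +
        Multiset.card (s.filter (fun x => ¬ 2 ≤ x)) = Multiset.card s := by
      rw [← Multiset.card_add, hsplit]
    omega
  rw [hcard]
  have hrep : Multiset.replicate (Multiset.card (s.filter (fun x => ¬ 2 ≤ x))) 1 =
      s.filter (fun x => ¬ 2 ≤ x) := by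
    symm
    rw [Multiset.eq_replicate]
    refine ⟨rfl, fun b hb => ?_⟩
    have h1 := h b (Multiset.mem_of_mem_filter hb)
    have h2 := Multiset.of_mem_filter hb
    omega
  rw [hrep, Multiset.filter_add_not]

/-! ### The cardinality of `Mset n d 1` -/

lemma parts_card_le {n : ℕ} (P : Nat.Partition n) : Multiset.card P.parts ≤ n := by
  have := aux_card_le_sum P.parts (fun x hx => P.parts_pos hx)
  rwa [P.parts_sum] at this

/-- Turn a partition of `d` into a partition of `n` of colength `d` (needs `2d ≤ n`). -/
def growPartition (n d : ℕ) (hn : 2 * d ≤ n) (P : Nat.Partition d) : Nat.Partition n where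
  parts := growParts P.parts (n - d - Multiset.card P.parts)
  parts_pos := fun hi => growParts_pos _ _ _ hi
  parts_sum := by
    have hc : Multiset.card P.parts ≤ d := by
      have := parts_card_le P; omega
    rw [growParts_sum, P.parts_sum]; omega

lemma growPartition_card {n d : ℕ} (hn : 2 * d ≤ n) (P : Nat.Partition d) :
    Multiset.card (growPartition n d hn P).parts = n - d := by
  have hc : Multiset.card P.parts ≤ d := parts_card_le P
  show Multiset.card (growParts P.parts (n - d - Multiset.card P.parts)) = n - d
  rw [growParts_card]
  omega

lemma card_Mset_one (n d : ℕ) (hd : 1 ≤ d) (hn : 2 * d ≤ n) :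
    (Mset n d 1).card = Fintype.card (Nat.Partition d) := by
  classical
  have himg : Mset n d 1 =
      Finset.image (fun P : Nat.Partition d => fun _ : Fin 1 => growPartition n d hn P)
        Finset.univ := by
    ext T
    simp only [Mset, Finset.mem_filter, Finset.mem_univ, true_and, Finset.mem_image]
    constructor
    · rintro ⟨h1, h2⟩
      have hcol : colen (T 0) = d := by rw [← h2, Fin.sum_univ_one]
      have hpos : ∀ x ∈ (T 0).parts, 1 ≤ x := fun x hx => (T 0).parts_pos hx
      have hcle := parts_card_le (T 0)
      simp only [colen] at hcol
      have hcards : Multiset.card (T 0).parts = n - d := by omega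
      refine ⟨⟨shrinkParts (T 0).parts, fun hi => shrinkParts_pos _ _ hi, ?_⟩, ?_⟩
      · rw [shrinkParts_sum _ hpos, (T 0).parts_sum]
        omega
      · funext j
        rw [Fin.fin_one_eq_zero j]
        ext1
        show growParts (shrinkParts (T 0).parts) _ = (T 0).parts
        have hsc : Multiset.card (shrinkParts (T 0).parts) =
            Multiset.card ((T 0).parts.filter (2 ≤ ·)) := shrinkParts_card _
        have hfle : Multiset.card ((T 0).parts.filter (2 ≤ ·)) ≤
            Multiset.card (T 0).parts :=
          Multiset.card_le_card (Multiset.filter_le _ _)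
        have heq : n - d - Multiset.card (shrinkParts (T 0).parts) =
            Multiset.card (T 0).parts - Multiset.card ((T 0).parts.filter (2 ≤ ·)) := by
          omega
        rw [heq, grow_shrink _ hpos]
    · rintro ⟨P, rfl⟩
      have hcol : colen (growPartition n d hn P) = d := by
        simp only [colen, growPartition_card hn P]
        omega
      constructor
      · intro j; rw [hcol]; exact hd
      · rw [Fin.sum_univ_one, hcol]
  rw [himg, Finset.card_image_of_injective _ ?_, Finset.card_univ]
  intro P P' hPP
  have h0 : growPartition n d hn P = growPartition n d hn P' := congrFun hPP 0
  have hparts : growParts P.parts (n - d - Multiset.card P.parts) =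
      growParts P'.parts (n - d - Multiset.card P'.parts) := congrArg Nat.Partition.parts h0
  ext1
  calc P.parts = shrinkParts (growParts P.parts (n - d - Multiset.card P.parts)) :=
        (shrink_grow _ _ (fun x hx => P.parts_pos hx)).symm
  _ = shrinkParts (growParts P'.parts (n - d - Multiset.card P'.parts)) := by rw [hparts]
  _ = P'.parts := shrink_grow _ _ (fun x hx => P'.parts_pos hx)

/-! ### Analytic lemmas -/

lemma term_tendsto (m : ℕ) (hm : 1 ≤ m) :
    Filter.Tendsto (fun q : ℝ => q ^ m / (1 - q ^ m))
      (nhdsWithin 0 (Set.Ioi 0)) (nhds 0) := by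
  have h1 : Filter.Tendsto (fun q : ℝ => q ^ m) (nhds (0 : ℝ)) (nhds 0) := by
    have := (continuous_pow m).tendsto (0 : ℝ)
    simpa [zero_pow (by omega : m ≠ 0)] using this
  have h2 : Filter.Tendsto (fun q : ℝ => 1 - q ^ m) (nhds (0 : ℝ)) (nhds 1) := by
    simpa using (tendsto_const_nhds.sub h1)
  have := h1.div h2 one_ne_zero
  rw [zero_div] at this
  exact this.mono_left nhdsWithin_le_nhds

section main

variable {n d k : ℕ}

/-- Exponents in `Wq` are at least 1 for tuples in `Mset`. -/
lemma exp_ge_one (T : Fin k → Nat.Partition n) (hT : T ∈ Mset n d k) (j : Fin k) :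
    1 ≤ ∑ i ∈ Finset.univ.filter (fun i => i ≤ j), colen (T i) := by
  simp only [Mset, Finset.mem_filter, Finset.mem_univ, true_and] at hT
  calc 1 ≤ colen (T j) := hT.1 j
  _ ≤ _ := Finset.single_le_sum (f := fun i => colen (T i))
      (fun i _ => Nat.zero_le _) (by simp)

lemma exp_last (hk : 1 ≤ k) (T : Fin k → Nat.Partition n) (hT : T ∈ Mset n d k) :
    ∑ i ∈ Finset.univ.filter (fun i => i ≤ (⟨k - 1, by omega⟩ : Fin k)), colen (T i) = d := by
  simp only [Mset, Finset.mem_filter, Finset.mem_univ, true_and] at hT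
  rw [← hT.2]
  congr 1
  rw [Finset.filter_true_of_mem]
  intro i _
  rw [Fin.le_def]
  have := i.isLt
  show i.val ≤ k - 1
  omega

/-- `W_q(T)/φ(q)` tends to `1` if `k = 1` and `0` otherwise. -/
lemma Wq_div_phi_tendsto (hd : 1 ≤ d) (hk : 1 ≤ k)
    (T : Fin k → Nat.Partition n) (hT : T ∈ Mset n d k) :
    Filter.Tendsto (fun q : ℝ => Wq q T / (q ^ d / (1 - q ^ d)))
      (nhdsWithin 0 (Set.Ioi 0)) (nhds (if k = 1 then 1 else 0)) := by
  classical
  set last : Fin k := ⟨k - 1, by omega⟩ with hlast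
  set f : Fin k → ℝ → ℝ := fun j q =>
    q ^ (∑ i ∈ Finset.univ.filter (fun i => i ≤ j), colen (T i)) /
      (1 - q ^ (∑ i ∈ Finset.univ.filter (fun i => i ≤ j), colen (T i))) with hf
  have hR : Filter.Tendsto (fun q : ℝ => ∏ j ∈ Finset.univ.erase last, f j q)
      (nhdsWithin 0 (Set.Ioi 0)) (nhds (∏ _j ∈ Finset.univ.erase last, (0 : ℝ))) := by
    apply tendsto_finset_prod
    intro j _
    exact term_tendsto _ (exp_ge_one T hT j)
  have hval : (∏ _j ∈ Finset.univ.erase last, (0 : ℝ)) = if k = 1 then 1 else 0 := by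
    rw [Finset.prod_const, Finset.card_erase_of_mem (Finset.mem_univ _)]
    simp only [Finset.card_univ, Fintype.card_fin]
    rcases Nat.eq_or_lt_of_le hk with h | h
    · simp [← h]
    · rw [zero_pow (by omega : k - 1 ≠ 0), if_neg (by omega)]
  rw [← hval]
  apply hR.congr'
  rw [Filter.eventuallyEq_iff_exists_mem]
  refine ⟨Set.Ioo 0 1, Ioo_mem_nhdsGT_of_mem (by norm_num), ?_⟩
  intro q hq
  obtain ⟨hq0, hq1⟩ := hq
  have hqd : q ^ d < 1 := pow_lt_one₀ (le_of_lt hq0) hq1 (by omega)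
  have hphi : q ^ d / (1 - q ^ d) ≠ 0 := by
    apply div_ne_zero
    · positivity
    · exact ne_of_gt (by linarith)
  have hW : Wq q T = (q ^ d / (1 - q ^ d)) * ∏ j ∈ Finset.univ.erase last, f j q := by
    rw [Wq, ← Finset.mul_prod_erase Finset.univ _ (Finset.mem_univ last)]
    congr 2
    · rw [exp_last hk T hT]
    · rw [exp_last hk T hT]
  show ∏ j ∈ Finset.univ.erase last, f j q = Wq q T / (q ^ d / (1 - q ^ d))
  rw [hW, mul_comm, mul_div_assoc, div_self hphi, mul_one]

/-- `Z(q)/φ(q)` tends to `|Mset n d 1|`. -/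
lemma Zfn_div_phi_tendsto (hd : 1 ≤ d) :
    Filter.Tendsto (fun q : ℝ => Zfn n d q / (q ^ d / (1 - q ^ d)))
      (nhdsWithin 0 (Set.Ioi 0)) (nhds ((Mset n d 1).card : ℝ)) := by
  classical
  have hsum : ∀ q : ℝ, Zfn n d q / (q ^ d / (1 - q ^ d)) =
      ∑ k' ∈ Finset.Icc 1 d, ∑ T' ∈ Mset n d k', Wq q T' / (q ^ d / (1 - q ^ d)) := by
    intro q
    rw [Zfn, Finset.sum_div]
    congr 1
    funext k'
    rw [Finset.sum_div]
  have hlim : Filter.Tendsto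
      (fun q : ℝ => ∑ k' ∈ Finset.Icc 1 d, ∑ T' ∈ Mset n d k',
        Wq q T' / (q ^ d / (1 - q ^ d)))
      (nhdsWithin 0 (Set.Ioi 0))
      (nhds (∑ k' ∈ Finset.Icc 1 d, ∑ _T' ∈ Mset n d k',
        (if k' = 1 then (1 : ℝ) else 0))) := by
    apply tendsto_finset_sum
    intro k' hk'
    apply tendsto_finset_sum
    intro T' hT'
    exact Wq_div_phi_tendsto hd (Finset.mem_Icc.mp hk').1 T' hT'
  have hvalue : (∑ k' ∈ Finset.Icc 1 d, ∑ _T' ∈ Mset n d k',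
      (if k' = 1 then (1 : ℝ) else 0)) = ((Mset n d 1).card : ℝ) := by
    rw [Finset.sum_congr rfl (fun k' _ => Finset.sum_const _)]
    have : ∀ k' ∈ Finset.Icc 1 d,
        (Mset n d k').card • (if k' = 1 then (1 : ℝ) else 0) =
        (if k' = 1 then ((Mset n d 1).card : ℝ) else 0) := by
      intro k' _
      by_cases h : k' = 1
      · subst h; simp
      · simp [h]
    rw [Finset.sum_congr rfl this, Finset.sum_ite_eq' (Finset.Icc 1 d) 1
      (fun _ => ((Mset n d 1).card : ℝ))]
    rw [if_pos (Finset.mem_Icc.mpr ⟨le_refl 1, hd⟩)]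
  rw [← hvalue]
  exact hlim.congr (fun q => (hsum q).symm)

end main

theorem zero_temp_stmt12 (d n : ℕ) (hd : 1 ≤ d) (hn : 2 * d ≤ n)
    (k : ℕ) (hk1 : 1 ≤ k) (hkd : k ≤ d)
    (T : Fin k → Nat.Partition n) (hT : T ∈ Mset n d k) :
    (Mset n d 1).card = Fintype.card (Nat.Partition d) ∧
    Filter.Tendsto (fun q : ℝ => Wq q T / Zfn n d q)
      (nhdsWithin 0 (Set.Ioi 0))
      (nhds (if k = 1 then (((Mset n d 1).card : ℝ))⁻¹ else 0)) := by
  classical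
  have hcard := card_Mset_one n d hd hn
  refine ⟨hcard, ?_⟩
  have hpos : 0 < (Mset n d 1).card := by
    rw [hcard]
    exact Fintype.card_pos_iff.mpr ⟨⟨Multiset.replicate d 1, by
      intro i hi; rw [Multiset.eq_of_mem_replicate hi]; norm_num, by simp⟩⟩
  have hcne : ((Mset n d 1).card : ℝ) ≠ 0 := Nat.cast_ne_zero.mpr (by omega)
  have hW := Wq_div_phi_tendsto (n := n) hd hk1 T hT
  have hZ := Zfn_div_phi_tendsto (n := n) (d := d) hd
  have hdiv := hW.div hZ hcne
  have hlimval : (if k = 1 then (1 : ℝ) else 0) / ((Mset n d 1).card : ℝ) =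
      (if k = 1 then (((Mset n d 1).card : ℝ))⁻¹ else 0) := by
    by_cases h : k = 1
    · simp [h, one_div]
    · simp [h]
  rw [hlimval] at hdiv
  apply hdiv.congr'
  rw [Filter.eventuallyEq_iff_exists_mem]
  refine ⟨Set.Ioo 0 1, Ioo_mem_nhdsGT_of_mem (by norm_num), ?_⟩
  intro q hq
  obtain ⟨hq0, hq1⟩ := hq
  have hqd : q ^ d < 1 := pow_lt_one₀ (le_of_lt hq0) hq1 (by omega)
  have hphi : q ^ d / (1 - q ^ d) ≠ 0 := by
    apply div_ne_zero
    · positivity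
    · exact ne_of_gt (by linarith)
  show Wq q T / (q ^ d / (1 - q ^ d)) / (Zfn n d q / (q ^ d / (1 - q ^ d))) =
    Wq q T / Zfn n d q
  rw [div_div_div_cancel_right₀]
  · exact hphi
end

section
/- Let d ≥ 1, n ≥ 2d, and let μ, ν be partitions of n. Then lim_{q → 0⁺} q^{−d} · H^d_q(μ, ν) = Σ_{μ^{(1)}} H(μ^{(1)}, μ, ν), where the sum runs over all partitions μ^{(1)} of n with colength ℓ*(μ^{(1)}) = d. In other words, in the zero-temperature limit the (rescaled) quantum weighted double Hurwitz number reproduces the uniformly weighted count of coverings with exactly three branch points (Belyi curves). -/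
open scoped Classical

/-- The Hurwitz number `H(μ⁽¹⁾, …, μ⁽ᵐ⁾)`: the number of `m`-tuples `(h₁, …, h_m)` of
permutations in `S_n` with `h₁h₂⋯h_m = id` and the cycle type of `hᵢ` equal to `μ⁽ⁱ⁾`
for each `i`, divided by `n!`. -/
noncomputable def Hur {n m : ℕ} (M : Fin m → Nat.Partition n) : ℚ :=
  (Nat.card {h : Fin m → Equiv.Perm (Fin n) //
      (List.ofFn h).prod = 1 ∧ ∀ i, (h i).partition.parts = (M i).parts} : ℚ)
    / (n.factorial : ℚ)

/-- The quantum weighted double Hurwitz number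
`H^d_q(μ,ν) = Σ_{k=1}^d Σ_{T ∈ 𝔐^{(n)}_{d,k}} W_q(T)·H(T, μ, ν)`. -/
noncomputable def Hdq (q : ℝ) (d : ℕ) {n : ℕ} (μ ν : Nat.Partition n) : ℝ :=
  ∑ k ∈ Finset.Icc 1 d, ∑ T ∈ Mset n d k,
    Wq q T * ((Hur (Fin.snoc (Fin.snoc T μ) ν) : ℚ) : ℝ)

lemma key_tendsto {d n : ℕ} (m : ℕ) (T : Fin (m+1) → Nat.Partition n)
    (hT : T ∈ Mset n d (m+1)) :
    Filter.Tendsto (fun q : ℝ => (q ^ d)⁻¹ * Wq q T) (nhdsWithin 0 (Set.Ioi 0))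
      (nhds (if m = 0 then 1 else 0)) := by
  obtain ⟨h1, h2⟩ : (∀ j, 1 ≤ colen (T j)) ∧ ∑ j, colen (T j) = d := by
    simpa [Mset] using hT
  set e : Fin (m+1) → ℕ := fun j => ∑ i ∈ Finset.univ.filter (fun i => i ≤ j), colen (T i)
    with he_def
  have he : ∀ j, 1 ≤ e j := by
    intro j
    refine le_trans (h1 j)
      (Finset.single_le_sum (f := fun i => colen (T i)) (fun i _ => Nat.zero_le _) ?_)
    simp
  have hlast : e (Fin.last m) = d := by
    rw [he_def]
    simp only
    rw [show (Finset.univ.filter (fun i => i ≤ Fin.last m)) = Finset.univ by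
      ext i; simp [Fin.le_last]]
    exact h2
  set E := ∑ j, e j with hE_def
  have hdE : d ≤ E := by
    rw [← hlast]
    exact Finset.single_le_sum (fun i _ => Nat.zero_le _) (Finset.mem_univ _)
  have hEd : m ≠ 0 → d + 1 ≤ E := by
    intro hm
    have h0l : (0 : Fin (m+1)) ≠ Fin.last m := by
      simp [Fin.ext_iff, Fin.last, Nat.pos_of_ne_zero hm]
      omega
    have : e 0 + e (Fin.last m) ≤ E := by
      rw [hE_def, ← Finset.sum_erase_add Finset.univ e (Finset.mem_univ (Fin.last m))]
      have h0mem : (0 : Fin (m+1)) ∈ Finset.univ.erase (Fin.last m) :=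
        Finset.mem_erase.2 ⟨h0l, Finset.mem_univ _⟩
      exact Nat.add_le_add_right (Finset.single_le_sum (fun i _ => Nat.zero_le _) h0mem) _
    have h4 := he 0
    omega
  have hEq : (if m = 0 then 1 else 0 : ℝ) = (0:ℝ) ^ (E - d) := by
    by_cases hm : m = 0
    · subst hm
      have : E = d := by
        rw [hE_def, Fin.sum_univ_one, ← hlast]; rfl
      simp [this]
    · rw [if_neg hm, zero_pow]
      have := hEd hm; omega
  rw [hEq]
  have hprod : Filter.Tendsto (fun q : ℝ => ∏ j, (1 - q ^ (e j))⁻¹)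
      (nhdsWithin 0 (Set.Ioi 0)) (nhds 1) := by
    have : Filter.Tendsto (fun q : ℝ => ∏ j, (1 - q ^ (e j))⁻¹)
        (nhdsWithin 0 (Set.Ioi 0)) (nhds (∏ j : Fin (m+1), (1 - (0:ℝ) ^ (e j))⁻¹)) := by
      apply tendsto_finset_prod
      intro j _
      have hc : ContinuousAt (fun q : ℝ => (1 - q ^ (e j))⁻¹) 0 := by
        apply ContinuousAt.inv₀
        · exact (continuous_const.sub (continuous_pow _)).continuousAt
        · simp [zero_pow (by have := he j; omega : e j ≠ 0)]
      exact hc.tendsto.mono_left nhdsWithin_le_nhds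
    convert this using 2 with j
    rw [Finset.prod_eq_one]
    intro j _
    simp [zero_pow (by have := he j; omega : e j ≠ 0)]
  have hpow : Filter.Tendsto (fun q : ℝ => q ^ (E - d))
      (nhdsWithin 0 (Set.Ioi 0)) (nhds ((0:ℝ) ^ (E - d))) :=
    ((continuous_pow (E - d)).tendsto 0).mono_left nhdsWithin_le_nhds
  have := hpow.mul hprod
  rw [mul_one] at this
  apply this.congr'
  filter_upwards [self_mem_nhdsWithin] with q hq
  have hq0 : q ≠ 0 := ne_of_gt hq
  have hWq : Wq q T = q ^ E * ∏ j, (1 - q ^ (e j))⁻¹ := by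
    rw [Wq, hE_def]
    rw [← Finset.prod_pow_eq_pow_sum, ← Finset.prod_mul_distrib]
    exact Finset.prod_congr rfl fun j _ => div_eq_mul_inv _ _
  rw [hWq, ← mul_assoc]
  congr 1
  rw [show E = d + (E - d) by omega, pow_add]
  field_simp
  rw [Nat.add_sub_cancel_left]

/-- For `d ≥ 1`, `n ≥ 2d` and partitions `μ, ν` of `n`,
`lim_{q→0⁺} q^{-d}·H^d_q(μ,ν) = Σ_{ℓ*(μ⁽¹⁾)=d} H(μ⁽¹⁾, μ, ν)`: in the zero-temperature
limit the rescaled quantum weighted double Hurwitz number reproduces the uniformly weighted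
count of coverings with exactly three branch points (Belyi curves). -/
theorem zero_temp_stmt14 (d n : ℕ) (hd : 1 ≤ d) (hn : 2 * d ≤ n)
    (μ ν : Nat.Partition n) :
    Filter.Tendsto (fun q : ℝ => (q ^ d)⁻¹ * Hdq q d μ ν)
      (nhdsWithin 0 (Set.Ioi 0))
      (nhds (∑ P ∈ Finset.univ.filter (fun P : Nat.Partition n => colen P = d),
        ((Hur ![P, μ, ν] : ℚ) : ℝ))) := by
  have hrw : (fun q : ℝ => (q ^ d)⁻¹ * Hdq q d μ ν) =
      fun q => ∑ k ∈ Finset.Icc 1 d, ∑ T ∈ Mset n d k,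
        ((q ^ d)⁻¹ * Wq q T) * ((Hur (Fin.snoc (Fin.snoc T μ) ν) : ℚ) : ℝ) := by
    funext q; simp [Hdq, Finset.mul_sum, mul_assoc]
  rw [hrw]
  have main : Filter.Tendsto
      (fun q : ℝ => ∑ k ∈ Finset.Icc 1 d, ∑ T ∈ Mset n d k,
        ((q ^ d)⁻¹ * Wq q T) * ((Hur (Fin.snoc (Fin.snoc T μ) ν) : ℚ) : ℝ))
      (nhdsWithin 0 (Set.Ioi 0))
      (nhds (∑ k ∈ Finset.Icc 1 d, ∑ T ∈ Mset n d k,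
        (if k = 1 then (1:ℝ) else 0) * ((Hur (Fin.snoc (Fin.snoc T μ) ν) : ℚ) : ℝ))) := by
    apply tendsto_finset_sum
    intro k hk
    apply tendsto_finset_sum
    intro T hT
    obtain ⟨m, rfl⟩ : ∃ m, k = m + 1 :=
      ⟨k - 1, by have := (Finset.mem_Icc.1 hk).1; omega⟩
    have h := (key_tendsto m T hT).mul_const
      ((Hur (Fin.snoc (Fin.snoc T μ) ν) : ℚ) : ℝ)
    simpa [show (m + 1 = 1) ↔ (m = 0) by omega] using h
  have heq : (∑ k ∈ Finset.Icc 1 d, ∑ T ∈ Mset n d k,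
        (if k = 1 then (1:ℝ) else 0) * ((Hur (Fin.snoc (Fin.snoc T μ) ν) : ℚ) : ℝ))
      = ∑ P ∈ Finset.univ.filter (fun P : Nat.Partition n => colen P = d),
        ((Hur ![P, μ, ν] : ℚ) : ℝ) := by
    rw [Finset.sum_eq_single_of_mem 1 (Finset.mem_Icc.2 ⟨le_refl 1, hd⟩)]
    · simp only [if_pos rfl, one_mul]
      refine Finset.sum_bij' (fun T _ => T 0) (fun P _ => fun _ => P) ?_ ?_ ?_ ?_ ?_
      · intro T hT
        simp only [Mset, Finset.mem_filter, Finset.mem_univ, true_and] at hT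
        simp only [Finset.mem_filter, Finset.mem_univ, true_and]
        simpa using hT.2
      · intro P hP
        simp only [Finset.mem_filter, Finset.mem_univ, true_and] at hP
        simp only [Mset, Finset.mem_filter, Finset.mem_univ, true_and]
        exact ⟨fun _ => hP ▸ hd, by simpa using hP⟩
      · intro T _
        funext j
        rw [Subsingleton.elim j 0]
      · intro P _
        rfl
      · intro T _
        have hfun : Fin.snoc (Fin.snoc T μ) ν = ![T 0, μ, ν] := by
          funext i; fin_cases i <;> simp [Fin.snoc] <;> congr
        simp [hfun]
    · intro k _ hk1
      apply Finset.sum_eq_zero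
      intro T _
      simp [hk1]
  rw [← heq]
  exact main
end
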